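/- arXiv:2004.14346 — 4 statements merged into one kernel-verified Lean document; each statement's English description precedes it below -/
import Mathlib

section
/- Let (X, Σ, μ) be a finite measure space, (E, ‖·‖_E) a Banach space, and let L(X; E) denote the complete metric space of (equivalence classes of) E-valued measurable functions with the topology of convergence in measure μ. Then for any continuous function φ : [S,T] → L(X;E) (with 0 ≤ S < T < ∞), there exists a jointly measurable function φ̃ : [S,T] × X → E such that for every t ∈ [S,T], φ(t)(x) = φ̃(t,x) in E for μ-a.e. x ∈ X. -/
open MeasureTheory Filter Set
open scoped Topology ENNReal

/-- Lemma 2.2 of the paper: if `φ : [S,T] → L(X;E)` is continuous into the space of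
`E`-valued measurable functions with the topology of convergence in measure `μ`
(a finite measure), then there is a jointly measurable function `φ' : [S,T] × X → E`
such that for every `t ∈ [S,T]`, `φ(t) = φ'(t,·)` `μ`-a.e. -/
theorem stmt2 {X : Type*} [MeasurableSpace X] (μ : Measure X) [IsFiniteMeasure μ]
    {E : Type*} [NormedAddCommGroup E] [NormedSpace ℝ E] [CompleteSpace E]
    (S T : ℝ) (hS : 0 ≤ S) (hST : S < T)
    (φ : ℝ → X → E)
    (hmeas : ∀ t, AEStronglyMeasurable (φ t) μ)
    (hcont : ∀ t₀ ∈ Icc S T, ∀ u : ℕ → ℝ, (∀ n, u n ∈ Icc S T) →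
      Tendsto u atTop (𝓝 t₀) →
      TendstoInMeasure μ (fun n => φ (u n)) atTop (φ t₀)) :
    ∃ φ' : ℝ × X → E, StronglyMeasurable φ' ∧
      ∀ t ∈ Icc S T, ∀ᵐ x ∂μ, φ t x = φ' (t, x) := by
  classical
  borelize E
  haveI : Nonempty E := ⟨0⟩
  set Δ : ℝ := T - S with hΔdef
  have hΔ : (0:ℝ) < Δ := sub_pos.2 hST
  have hmesh : ∀ n : ℕ, (0:ℝ) < Δ / 2 ^ n := fun n => div_pos hΔ (by positivity)
  set pt : ℕ → ℕ → ℝ := fun n j => S + j * (Δ / 2 ^ n) with hptdef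
  set idx : ℕ → ℝ → ℕ := fun n t => ⌊(t - S) / (Δ / 2 ^ n)⌋₊ with hidxdef
  have key_a : ∀ (n : ℕ), ∀ t ∈ Icc S T, (0:ℝ) ≤ (t - S) / (Δ / 2 ^ n) :=
    fun n t ht => div_nonneg (sub_nonneg.2 ht.1) (hmesh n).le
  have hτ_le : ∀ (n : ℕ), ∀ t ∈ Icc S T, pt n (idx n t) ≤ t := by
    intro n t ht
    have h1 : ((idx n t : ℕ) : ℝ) ≤ (t - S) / (Δ / 2 ^ n) := by
      simp only [hidxdef]
      exact Nat.floor_le (key_a n t ht)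
    have h2 := mul_le_mul_of_nonneg_right h1 (hmesh n).le
    rw [div_mul_cancel₀ _ (hmesh n).ne'] at h2
    simp only [hptdef]
    linarith
  have ht_lt : ∀ (n : ℕ), ∀ t ∈ Icc S T, t < pt n (idx n t + 1) := by
    intro n t ht
    have h1 : (t - S) / (Δ / 2 ^ n) < (idx n t : ℝ) + 1 := by
      simp only [hidxdef]
      exact Nat.lt_floor_add_one _
    have h2 := mul_lt_mul_of_pos_right h1 (hmesh n)
    rw [div_mul_cancel₀ _ (hmesh n).ne'] at h2
    simp only [hptdef]
    push_cast
    linarith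
  have hpt_ge : ∀ (n j : ℕ), S ≤ pt n j := by
    intro n j
    simp only [hptdef]
    have h0 : 0 ≤ (j:ℝ) * (Δ / 2 ^ n) := mul_nonneg (Nat.cast_nonneg j) (hmesh n).le
    linarith
  have hidx_le : ∀ (n : ℕ), ∀ t ∈ Icc S T, idx n t ≤ 2 ^ n := by
    intro n t ht
    simp only [hidxdef]
    apply Nat.floor_le_of_le
    rw [div_le_iff₀ (hmesh n)]
    have h2 : (2:ℝ) ^ n * (Δ / 2 ^ n) = Δ := by field_simp
    push_cast
    rw [h2]
    linarith [ht.2]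
  have hτ_mem : ∀ (n : ℕ), ∀ t ∈ Icc S T, pt n (idx n t) ∈ Icc S T :=
    fun n t ht => ⟨hpt_ge n _, le_trans (hτ_le n t ht) ht.2⟩
  have hτ_dist : ∀ (n : ℕ), ∀ t ∈ Icc S T, dist (pt n (idx n t)) t ≤ Δ / 2 ^ n := by
    intro n t ht
    rw [Real.dist_eq, abs_sub_comm, abs_of_nonneg (sub_nonneg.2 (hτ_le n t ht))]
    have h1 := ht_lt n t ht
    have h2 := hτ_le n t ht
    simp only [hptdef] at h1 h2 ⊢
    push_cast at h1 h2 ⊢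
    linarith
  have hmem_iff : ∀ (n : ℕ), ∀ t ∈ Icc S T, ∀ j : ℕ,
      t ∈ Ico (pt n j) (pt n (j + 1)) ↔ idx n t = j := by
    intro n t ht j
    constructor
    · rintro ⟨h1, h2⟩
      simp only [hptdef] at h1 h2
      have hj1 : (j : ℝ) ≤ (t - S) / (Δ / 2 ^ n) := by
        rw [le_div_iff₀ (hmesh n)]
        linarith
      have hj2 : (t - S) / (Δ / 2 ^ n) < (j : ℝ) + 1 := by
        rw [div_lt_iff₀ (hmesh n)]
        push_cast at h2 ⊢
        linarith
      simp only [hidxdef]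
      rw [Nat.floor_eq_iff (key_a n t ht)]
      exact ⟨hj1, hj2⟩
    · rintro rfl
      exact ⟨hτ_le n t ht, ht_lt n t ht⟩
  -- strongly measurable versions of the `φ t`
  set g : ℝ → X → E := fun t => (hmeas t).mk (φ t) with hgdef
  have hg_meas : ∀ t, StronglyMeasurable (g t) := fun t => (hmeas t).stronglyMeasurable_mk
  have hg_eq : ∀ t, φ t =ᵐ[μ] g t := fun t => (hmeas t).ae_eq_mk
  -- the piecewise-constant-in-time approximations
  set f : ℕ → ℝ × X → E := fun n p =>
    ∑ j ∈ Finset.range (2 ^ n + 1),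
      (Set.indicator (Ico (pt n j) (pt n (j + 1))) (fun _ => (1:ℝ)) p.1) • g (pt n j) p.2
    with hfdef
  have hf_meas : ∀ n, StronglyMeasurable (f n) := by
    intro n
    apply Finset.stronglyMeasurable_fun_sum
    intro j _
    exact ((measurable_const.indicator measurableSet_Ico).comp
      measurable_fst).stronglyMeasurable.smul ((hg_meas (pt n j)).comp_measurable measurable_snd)
  have hf_eq : ∀ (n : ℕ), ∀ t ∈ Icc S T, ∀ x, f n (t, x) = g (pt n (idx n t)) x := by
    intro n t ht x
    have hmem : idx n t ∈ Finset.range (2 ^ n + 1) :=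
      Finset.mem_range.2 (Nat.lt_succ_of_le (hidx_le n t ht))
    have h0 : ∀ j ∈ Finset.range (2 ^ n + 1), j ≠ idx n t →
        (Set.indicator (Ico (pt n j) (pt n (j + 1))) (fun _ => (1:ℝ)) (t, x).1) •
          g (pt n j) (t, x).2 = 0 := by
      intro j _ hne
      rw [Set.indicator_of_notMem, zero_smul]
      intro hmem'
      exact hne ((hmem_iff n t ht j).1 hmem').symm
    simp only [hfdef]
    rw [Finset.sum_eq_single_of_mem _ hmem h0,
      Set.indicator_of_mem ((hmem_iff n t ht (idx n t)).2 rfl), one_smul]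
  -- uniform (in t) continuity estimate
  have key : ∀ ε : ℝ, 0 < ε → ∀ δ : ℝ≥0∞, 0 < δ → ∃ N : ℕ, ∀ n ≥ N, ∀ t ∈ Icc S T,
      μ {x | ε ≤ dist (φ (pt n (idx n t)) x) (φ t x)} ≤ δ := by
    by_contra hcon
    push_neg at hcon
    obtain ⟨ε, hε, δ, hδ, hcon⟩ := hcon
    choose n hn t ht hμbig using hcon
    obtain ⟨t₀, ht₀, κ, hκ, hκlim⟩ := isCompact_Icc.tendsto_subseq ht
    have hκlim' : Tendsto (fun j => t (κ j)) atTop (𝓝 t₀) := hκlim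
    have hw_mem : ∀ j, pt (n (κ j)) (idx (n (κ j)) (t (κ j))) ∈ Icc S T :=
      fun j => hτ_mem _ _ (ht (κ j))
    have hmeshlim : Tendsto (fun j : ℕ => Δ / 2 ^ j) atTop (𝓝 0) := by
      have h2 : Tendsto (fun j : ℕ => (2⁻¹:ℝ) ^ j) atTop (𝓝 0) :=
        tendsto_pow_atTop_nhds_zero_of_lt_one (by norm_num) (by norm_num)
      have h3 := h2.const_mul Δ
      simp only [mul_zero] at h3
      refine h3.congr fun j => ?_
      rw [inv_pow, ← div_eq_mul_inv]
    have hw_lim : Tendsto (fun j => pt (n (κ j)) (idx (n (κ j)) (t (κ j)))) atTop (𝓝 t₀) := by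
      apply Filter.Tendsto.congr_dist hκlim'
      apply squeeze_zero (fun j => dist_nonneg) (fun j => ?_) hmeshlim
      rw [dist_comm]
      refine le_trans (hτ_dist _ _ (ht (κ j))) ?_
      have hexp : (2:ℝ) ^ j ≤ 2 ^ (n (κ j)) :=
        pow_le_pow_right₀ one_le_two (hκ.le_apply.trans (hn (κ j)))
      exact div_le_div_of_nonneg_left hΔ.le (by positivity) hexp
    have hA := tendstoInMeasure_iff_dist.1 (hcont t₀ ht₀ _ hw_mem hw_lim) (ε / 2) (half_pos hε)
    have hB := tendstoInMeasure_iff_dist.1 (hcont t₀ ht₀ (fun j => t (κ j)) (fun j => ht (κ j)) hκlim') (ε / 2) (half_pos hε)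
    have hbound : ∀ j, μ {x | ε ≤ dist (φ (pt (n (κ j)) (idx (n (κ j)) (t (κ j)))) x)
        (φ (t (κ j)) x)} ≤
        μ {x | ε / 2 ≤ dist (φ (pt (n (κ j)) (idx (n (κ j)) (t (κ j)))) x) (φ t₀ x)} +
        μ {x | ε / 2 ≤ dist (φ (t (κ j)) x) (φ t₀ x)} := by
      intro j
      refine le_trans (measure_mono ?_) (measure_union_le _ _)
      intro x hx
      simp only [mem_setOf_eq, mem_union] at hx ⊢
      by_contra hcon2
      push_neg at hcon2
      have htri := dist_triangle (φ (pt (n (κ j)) (idx (n (κ j)) (t (κ j)))) x) (φ t₀ x)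
        (φ (t (κ j)) x)
      rw [dist_comm (φ t₀ x) (φ (t (κ j)) x)] at htri
      linarith [hx, hcon2.1, hcon2.2]
    have hzero : Tendsto (fun j => μ {x | ε ≤
        dist (φ (pt (n (κ j)) (idx (n (κ j)) (t (κ j)))) x) (φ (t (κ j)) x)}) atTop (𝓝 0) := by
      refine tendsto_of_tendsto_of_tendsto_of_le_of_le tendsto_const_nhds
        (by simpa using hA.add hB) (fun j => zero_le) hbound
    have hδ0 : δ ≤ 0 := ge_of_tendsto hzero (Eventually.of_forall fun j => (hμbig (κ j)).le)
    exact absurd hδ0 (not_le.2 hδ)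
  -- choose a sequence of grids with summable error
  have key2 : ∀ k : ℕ, ∃ nk : ℕ, ∀ t ∈ Icc S T,
      μ {x | (2⁻¹:ℝ) ^ k ≤ dist (φ (pt nk (idx nk t)) x) (φ t x)} ≤ (2⁻¹ : ℝ≥0∞) ^ k := by
    intro k
    obtain ⟨N, hN⟩ := key ((2⁻¹:ℝ) ^ k) (by positivity) ((2⁻¹ : ℝ≥0∞) ^ k)
      (ENNReal.pow_pos (ENNReal.inv_pos.2 ENNReal.ofNat_ne_top) k)
    exact ⟨N, hN N le_rfl⟩
  choose m hm using key2
  set h : ℕ → ℝ × X → E := fun k => f (m k) with hhdef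
  have hh_meas : ∀ k, StronglyMeasurable (h k) := fun k => hf_meas (m k)
  set C : Set (ℝ × X) := {p | ∃ l, Tendsto (fun k => h k p) atTop (𝓝 l)} with hCdef
  have hC : MeasurableSet C := by
    have hdistm : ∀ a b : ℕ, Measurable fun p => dist (h a p) (h b p) :=
      fun a b => ((hh_meas a).dist (hh_meas b)).measurable
    have hCeq : C = ⋂ (i : ℕ), ⋃ (N : ℕ), ⋂ (a : ℕ), ⋂ (b : ℕ), ⋂ (_ : a ≥ N), ⋂ (_ : b ≥ N),
        {p | dist (h a p) (h b p) < (2⁻¹:ℝ) ^ i} := by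
      ext p
      simp only [hCdef, mem_setOf_eq, mem_iInter, mem_iUnion]
      constructor
      · rintro ⟨l, hl⟩ i
        have hc : CauchySeq fun k => h k p := hl.cauchySeq
        rw [Metric.cauchySeq_iff] at hc
        obtain ⟨N, hN⟩ := hc ((2⁻¹:ℝ) ^ i) (by positivity)
        exact ⟨N, fun a b ha hb => hN a ha b hb⟩
      · intro hyp
        have hc : CauchySeq fun k => h k p := by
          rw [Metric.cauchySeq_iff]
          intro ε hε
          obtain ⟨i, hi⟩ := exists_pow_lt_of_lt_one hε (by norm_num : (2⁻¹:ℝ) < 1)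
          obtain ⟨N, hN⟩ := hyp i
          exact ⟨N, fun a ha b hb => lt_trans (hN a b ha hb) hi⟩
        exact cauchySeq_tendsto_of_complete hc
    rw [hCeq]
    exact MeasurableSet.iInter fun i => MeasurableSet.iUnion fun N =>
      MeasurableSet.iInter fun a => MeasurableSet.iInter fun b =>
      MeasurableSet.iInter fun _ => MeasurableSet.iInter fun _ =>
      measurableSet_lt (hdistm a b) measurable_const
  set F : ℕ → ℝ × X → E := fun k => C.piecewise (h k) 0 with hFdef
  have hF_meas : ∀ k, StronglyMeasurable (F k) :=
    fun k => StronglyMeasurable.piecewise hC (hh_meas k) stronglyMeasurable_const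
  have hFconv : ∀ p, ∃ l, Tendsto (fun k => F k p) atTop (𝓝 l) := by
    intro p
    by_cases hp : p ∈ C
    · obtain ⟨l, hl⟩ := id hp
      refine ⟨l, hl.congr fun k => ?_⟩
      simp only [hFdef]
      rw [Set.piecewise_eq_of_mem _ _ _ hp]
    · refine ⟨0, ?_⟩
      have : ∀ k, F k p = 0 := fun k => Set.piecewise_eq_of_notMem _ _ _ hp
      simp only [this]
      exact tendsto_const_nhds
  set Φ : ℝ × X → E := fun p => limUnder atTop (fun k => F k p) with hΦdef
  have hΦtend : ∀ p, Tendsto (fun k => F k p) atTop (𝓝 (Φ p)) :=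
    fun p => tendsto_nhds_limUnder (hFconv p)
  have hΦmeas : StronglyMeasurable Φ :=
    stronglyMeasurable_of_tendsto atTop hF_meas (tendsto_pi_nhds.2 hΦtend)
  refine ⟨Φ, hΦmeas, ?_⟩
  intro t ht
  set s : ℕ → Set X := fun k =>
    {x | (2⁻¹:ℝ) ^ k ≤ dist (φ (pt (m k) (idx (m k) t)) x) (φ t x)} with hsdef
  have hssum : ∑' k, μ (s k) ≠ ∞ := by
    refine ne_top_of_le_ne_top ?_ (ENNReal.tsum_le_tsum fun k => hm k t ht)
    rw [ENNReal.tsum_geometric, ENNReal.one_sub_inv_two]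
    simp
  have hlimsup : μ (limsup s atTop) = 0 := measure_limsup_atTop_eq_zero hssum
  have hae1 : ∀ᵐ x ∂μ, ∀ k : ℕ, φ (pt (m k) (idx (m k) t)) x = g (pt (m k) (idx (m k) t)) x :=
    ae_all_iff.2 fun k => hg_eq _
  filter_upwards [hae1, measure_eq_zero_iff_ae_notMem.1 hlimsup] with x hx1 hx2
  have hev : ∀ᶠ k in atTop, x ∉ s k :=
    not_frequently.1 fun hf => hx2 (mem_limsup_iff_frequently_mem.2 hf)
  have hdist0 : Tendsto (fun k => dist (φ (pt (m k) (idx (m k) t)) x) (φ t x)) atTop (𝓝 0) := by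
    refine squeeze_zero' (Eventually.of_forall fun k => dist_nonneg) ?_
      (tendsto_pow_atTop_nhds_zero_of_lt_one (r := (2⁻¹:ℝ)) (by norm_num) (by norm_num))
    filter_upwards [hev] with k hk
    simp only [hsdef, mem_setOf_eq, not_le] at hk
    exact hk.le
  have hφlim : Tendsto (fun k => φ (pt (m k) (idx (m k) t)) x) atTop (𝓝 (φ t x)) :=
    tendsto_iff_dist_tendsto_zero.2 hdist0
  have hhval : ∀ k, h k (t, x) = φ (pt (m k) (idx (m k) t)) x := by
    intro k
    simp only [hhdef]
    rw [hf_eq (m k) t ht x, ← hx1 k]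
  have hmemC : (t, x) ∈ C := ⟨φ t x, hφlim.congr fun k => (hhval k).symm⟩
  have hFlim : Tendsto (fun k => F k (t, x)) atTop (𝓝 (φ t x)) := by
    refine hφlim.congr fun k => ?_
    simp only [hFdef]
    rw [Set.piecewise_eq_of_mem _ _ _ hmemC, hhval k]
  exact tendsto_nhds_unique hFlim (hΦtend (t, x))
end

section
/- Let 0 ≤ S < T < ∞, let (Ω, F, P) be a probability space with filtration F = (F_t), and let Z : [S,T]² × Ω → H (H a Euclidean space) be jointly measurable with Z(t,·) ∈ L¹_F(S,T;H) for each t and t ↦ Z(t,·) continuous into L¹_F(S,T;H). Suppose Z₁, Z₂ ∈ L¹_F(S,T;H) both satisfy Property (D) with respect to Z, i.e. for i = 1,2 and every t ∈ [S,T): lim_{ε↓0} (1/ε) E[∫_t^{t+ε} |Z(t,s) − Z_i(s)| ds] = 0. Then Z₁(s,ω) = Z₂(s,ω) for Leb⊗P-a.e. (s,ω) ∈ [S,T] × Ω. -/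
open MeasureTheory Filter Set ENNReal
open scoped Topology

lemma progMeasurable_uncurry_measurable {Ω : Type*} {mΩ : MeasurableSpace Ω}
    (F : MeasureTheory.Filtration ℝ mΩ) {E : Type*} [TopologicalSpace E] [MeasurableSpace E]
    [TopologicalSpace.PseudoMetrizableSpace E] [BorelSpace E] {u : ℝ → Ω → E}
    (hu : ProgMeasurable F u) :
    Measurable (fun p : ℝ × Ω => u p.1 p.2) := by
  intro B hB
  have hemb : ∀ n : ℕ, MeasurableEmbedding
      (fun p : Iic (n:ℝ) × Ω => ((p.1 : ℝ), p.2)) :=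
    fun n => (MeasurableEmbedding.subtype_coe measurableSet_Iic).prodMap .id
  have key : ∀ n : ℕ, MeasurableSet
      ((fun p : Iic (n:ℝ) × Ω => ((p.1 : ℝ), p.2)) ''
        ((fun p : Iic (n:ℝ) × Ω => u p.1 p.2) ⁻¹' B)) := by
    intro n
    refine (hemb n).measurableSet_image' ?_
    have h1 : Measurable[(Subtype.instMeasurableSpace).prod (F n)]
        (fun p : Iic (n:ℝ) × Ω => u p.1 p.2) := (hu n).measurable
    have h2 : (Subtype.instMeasurableSpace : MeasurableSpace (Iic (n:ℝ))).prod (F n)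
        ≤ (Subtype.instMeasurableSpace).prod mΩ :=
      sup_le_sup_left (MeasurableSpace.comap_mono (F.le n)) _
    exact (h1.mono h2 le_rfl) hB
  have heq : (fun p : ℝ × Ω => u p.1 p.2) ⁻¹' B =
      ⋃ n : ℕ, ((fun p : Iic (n:ℝ) × Ω => ((p.1 : ℝ), p.2)) ''
        ((fun p : Iic (n:ℝ) × Ω => u p.1 p.2) ⁻¹' B)) := by
    ext ⟨t, ω⟩
    simp only [mem_preimage, mem_iUnion, mem_image, Prod.ext_iff]
    constructor
    · intro h
      obtain ⟨n, hn⟩ := exists_nat_ge t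
      exact ⟨n, ⟨⟨t, hn⟩, ω⟩, h, rfl, rfl⟩
    · rintro ⟨n, ⟨⟨s, hs⟩, ω'⟩, h, rfl, rfl⟩
      exact h
  rw [heq]
  exact MeasurableSet.iUnion key

/-- Lemma 2.5 of the paper: uniqueness of the process satisfying Property (D).
If `Z(t,·)` is an `L¹` two-parameter process, continuous in `t` into `L¹`, and both
`Z₁, Z₂ ∈ L¹_F(S,T;H)` satisfy Property (D) with respect to `Z`, then `Z₁ = Z₂`
`Leb⊗P`-a.e. -/
theorem stmt3 {Ω : Type*} {mΩ : MeasurableSpace Ω} (P : Measure Ω) [IsProbabilityMeasure P]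
    (F : MeasureTheory.Filtration ℝ mΩ)
    {n : ℕ} (S T : ℝ) (hS : 0 ≤ S) (hST : S < T)
    (Z : ℝ → ℝ → Ω → EuclideanSpace ℝ (Fin n))
    (hZmeas : Measurable (fun q : (ℝ × ℝ) × Ω => Z q.1.1 q.1.2 q.2))
    (hZprog : ∀ t, ProgMeasurable F (Z t))
    (hZint : ∀ t ∈ Icc S T,
      (∫⁻ ω, ∫⁻ s in Icc S T, ENNReal.ofReal ‖Z t s ω‖ ∂volume ∂P) < ⊤)
    (hZcont : ∀ t₀ ∈ Icc S T,
      Tendsto (fun t => ∫⁻ ω, ∫⁻ s in Icc S T, ENNReal.ofReal ‖Z t s ω - Z t₀ s ω‖ ∂volume ∂P)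
        (𝓝[Icc S T] t₀) (𝓝 0))
    (Z₁ Z₂ : ℝ → Ω → EuclideanSpace ℝ (Fin n))
    (h₁prog : ProgMeasurable F Z₁) (h₂prog : ProgMeasurable F Z₂)
    (h₁int : (∫⁻ ω, ∫⁻ s in Icc S T, ENNReal.ofReal ‖Z₁ s ω‖ ∂volume ∂P) < ⊤)
    (h₂int : (∫⁻ ω, ∫⁻ s in Icc S T, ENNReal.ofReal ‖Z₂ s ω‖ ∂volume ∂P) < ⊤)
    (hD₁ : ∀ t ∈ Ico S T,
      Tendsto (fun ε : ℝ =>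
          (ENNReal.ofReal ε)⁻¹ *
            ∫⁻ ω, ∫⁻ s in Icc t (t + ε), ENNReal.ofReal ‖Z t s ω - Z₁ s ω‖ ∂volume ∂P)
        (𝓝[>] (0:ℝ)) (𝓝 0))
    (hD₂ : ∀ t ∈ Ico S T,
      Tendsto (fun ε : ℝ =>
          (ENNReal.ofReal ε)⁻¹ *
            ∫⁻ ω, ∫⁻ s in Icc t (t + ε), ENNReal.ofReal ‖Z t s ω - Z₂ s ω‖ ∂volume ∂P)
        (𝓝[>] (0:ℝ)) (𝓝 0)) :
    ∀ᵐ q ∂((volume.restrict (Icc S T)).prod P), Z₁ q.1 q.2 = Z₂ q.1 q.2 := by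
  -- Joint measurability
  have mZ1 : Measurable (fun p : ℝ × Ω => Z₁ p.1 p.2) :=
    progMeasurable_uncurry_measurable F h₁prog
  have mZ2 : Measurable (fun p : ℝ × Ω => Z₂ p.1 p.2) :=
    progMeasurable_uncurry_measurable F h₂prog
  set ψ : ℝ × Ω → ℝ≥0∞ := fun p => ENNReal.ofReal ‖Z₁ p.1 p.2 - Z₂ p.1 p.2‖ with hψdef
  have mψ : Measurable ψ := (mZ1.sub mZ2).norm.ennreal_ofReal
  set φ : ℝ → ℝ≥0∞ := fun s => ∫⁻ ω, ψ (s, ω) ∂P with hφdef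
  have mφ : Measurable φ := mψ.lintegral_prod_right'
  -- swap lemma
  have swap : ∀ (A : Set ℝ), MeasurableSet A → ∀ (f : ℝ × Ω → ℝ≥0∞), Measurable f →
      (∫⁻ ω, ∫⁻ s in A, f (s, ω) ∂volume ∂P)
        = ∫⁻ s in A, ∫⁻ ω, f (s, ω) ∂P ∂volume := by
    intro A hA f hf
    exact lintegral_lintegral_swap ((hf.comp measurable_swap).aemeasurable)
  -- Property (D) for the difference, after swapping
  have hDφ : ∀ t ∈ Ico S T,
      Tendsto (fun ε : ℝ => (ENNReal.ofReal ε)⁻¹ * ∫⁻ s in Icc t (t + ε), φ s ∂volume)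
        (𝓝[>] (0:ℝ)) (𝓝 0) := by
    intro t ht
    have hsum : Tendsto (fun ε : ℝ =>
        ((ENNReal.ofReal ε)⁻¹ *
            ∫⁻ ω, ∫⁻ s in Icc t (t + ε), ENNReal.ofReal ‖Z t s ω - Z₁ s ω‖ ∂volume ∂P) +
        ((ENNReal.ofReal ε)⁻¹ *
            ∫⁻ ω, ∫⁻ s in Icc t (t + ε), ENNReal.ofReal ‖Z t s ω - Z₂ s ω‖ ∂volume ∂P))
        (𝓝[>] (0:ℝ)) (𝓝 0) := by
      have := (hD₁ t ht).add (hD₂ t ht)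
      simpa using this
    refine tendsto_of_tendsto_of_tendsto_of_le_of_le tendsto_const_nhds hsum
      (fun ε => zero_le) ?_
    intro ε
    have hle : (∫⁻ ω, ∫⁻ s in Icc t (t + ε), ψ (s, ω) ∂volume ∂P)
        ≤ (∫⁻ ω, ∫⁻ s in Icc t (t + ε), ENNReal.ofReal ‖Z t s ω - Z₁ s ω‖ ∂volume ∂P) +
          (∫⁻ ω, ∫⁻ s in Icc t (t + ε), ENNReal.ofReal ‖Z t s ω - Z₂ s ω‖ ∂volume ∂P) := by
      have step1 : (∫⁻ ω, ∫⁻ s in Icc t (t + ε), ψ (s, ω) ∂volume ∂P)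
          ≤ ∫⁻ ω, ((∫⁻ s in Icc t (t + ε), ENNReal.ofReal ‖Z t s ω - Z₁ s ω‖ ∂volume) +
              (∫⁻ s in Icc t (t + ε), ENNReal.ofReal ‖Z t s ω - Z₂ s ω‖ ∂volume)) ∂P := by
        refine lintegral_mono fun ω => ?_
        have mf₁ : Measurable fun s => ENNReal.ofReal ‖Z t s ω - Z₁ s ω‖ := by
          apply Measurable.ennreal_ofReal
          apply Measurable.norm
          exact ((hZmeas.comp (((measurable_const.prodMk measurable_id).prodMk
            measurable_const)))).sub (mZ1.comp (measurable_id.prodMk measurable_const))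
        rw [← lintegral_add_left mf₁]
        refine lintegral_mono fun s => ?_
        have tri : ‖Z₁ s ω - Z₂ s ω‖ ≤ ‖Z t s ω - Z₁ s ω‖ + ‖Z t s ω - Z₂ s ω‖ := by
          have : Z₁ s ω - Z₂ s ω = (Z t s ω - Z₂ s ω) - (Z t s ω - Z₁ s ω) := by abel
          rw [this]
          exact (norm_sub_le _ _).trans (by rw [add_comm])
        calc ψ (s, ω) = ENNReal.ofReal ‖Z₁ s ω - Z₂ s ω‖ := rfl
          _ ≤ ENNReal.ofReal (‖Z t s ω - Z₁ s ω‖ + ‖Z t s ω - Z₂ s ω‖) :=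
              ENNReal.ofReal_le_ofReal tri
          _ = _ := ENNReal.ofReal_add (norm_nonneg _) (norm_nonneg _)
      have mF₁ : Measurable fun ω =>
          ∫⁻ s in Icc t (t + ε), ENNReal.ofReal ‖Z t s ω - Z₁ s ω‖ ∂volume := by
        apply Measurable.lintegral_prod_right' (f := fun p : Ω × ℝ =>
          ENNReal.ofReal ‖Z t p.2 p.1 - Z₁ p.2 p.1‖)
        apply Measurable.ennreal_ofReal
        apply Measurable.norm
        exact ((hZmeas.comp ((measurable_const.prodMk measurable_snd).prodMk
          measurable_fst))).sub (mZ1.comp (measurable_snd.prodMk measurable_fst))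
      calc (∫⁻ ω, ∫⁻ s in Icc t (t + ε), ψ (s, ω) ∂volume ∂P) ≤ _ := step1
        _ = _ := lintegral_add_left mF₁ _
    calc (ENNReal.ofReal ε)⁻¹ * ∫⁻ s in Icc t (t + ε), φ s ∂volume
        = (ENNReal.ofReal ε)⁻¹ * ∫⁻ ω, ∫⁻ s in Icc t (t + ε), ψ (s, ω) ∂volume ∂P := by
          rw [swap _ measurableSet_Icc ψ mψ]
      _ ≤ (ENNReal.ofReal ε)⁻¹ * ((∫⁻ ω, ∫⁻ s in Icc t (t + ε),
            ENNReal.ofReal ‖Z t s ω - Z₁ s ω‖ ∂volume ∂P) +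
          (∫⁻ ω, ∫⁻ s in Icc t (t + ε), ENNReal.ofReal ‖Z t s ω - Z₂ s ω‖ ∂volume ∂P)) :=
          mul_le_mul_right hle _
      _ = _ := mul_add _ _ _
  -- Integrability of φ on [S,T]
  have Cfin : (∫⁻ s in Icc S T, φ s ∂volume) < ⊤ := by
    have mG₁ : Measurable fun ω => ∫⁻ s in Icc S T, ENNReal.ofReal ‖Z₁ s ω‖ ∂volume := by
      apply Measurable.lintegral_prod_right' (f := fun p : Ω × ℝ =>
        ENNReal.ofReal ‖Z₁ p.2 p.1‖)
      exact ((mZ1.comp (measurable_snd.prodMk measurable_fst)).norm).ennreal_ofReal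
    have step1 : (∫⁻ ω, ∫⁻ s in Icc S T, ψ (s, ω) ∂volume ∂P)
        ≤ (∫⁻ ω, ∫⁻ s in Icc S T, ENNReal.ofReal ‖Z₁ s ω‖ ∂volume ∂P) +
          (∫⁻ ω, ∫⁻ s in Icc S T, ENNReal.ofReal ‖Z₂ s ω‖ ∂volume ∂P) := by
      rw [← lintegral_add_left mG₁]
      refine lintegral_mono fun ω => ?_
      have mf₁ : Measurable fun s => ENNReal.ofReal ‖Z₁ s ω‖ :=
        ((mZ1.comp (measurable_id.prodMk measurable_const)).norm).ennreal_ofReal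
      rw [← lintegral_add_left mf₁]
      refine lintegral_mono fun s => ?_
      calc ψ (s, ω) = ENNReal.ofReal ‖Z₁ s ω - Z₂ s ω‖ := rfl
        _ ≤ ENNReal.ofReal (‖Z₁ s ω‖ + ‖Z₂ s ω‖) :=
            ENNReal.ofReal_le_ofReal (norm_sub_le _ _)
        _ = _ := ENNReal.ofReal_add (norm_nonneg _) (norm_nonneg _)
    calc (∫⁻ s in Icc S T, φ s ∂volume)
        = ∫⁻ ω, ∫⁻ s in Icc S T, ψ (s, ω) ∂volume ∂P :=
          (swap _ measurableSet_Icc ψ mψ).symm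
      _ ≤ _ := step1
      _ < ⊤ := ENNReal.add_lt_top.2 ⟨h₁int, h₂int⟩
  -- the truncated function
  set φ' : ℝ → ℝ≥0∞ := (Icc S T).indicator φ with hφ'def
  have mφ' : Measurable φ' := mφ.indicator measurableSet_Icc
  have hφ'tot : (∫⁻ s, φ' s ∂volume) < ⊤ := by
    rw [hφ'def, lintegral_indicator measurableSet_Icc]
    exact Cfin
  have hφ'le : ∀ s, φ' s ≤ φ s := fun s => Set.indicator_le_self _ _ s
  have hDφ' : ∀ t ∈ Ico S T,
      Tendsto (fun ε : ℝ => (ENNReal.ofReal ε)⁻¹ * ∫⁻ s in Icc t (t + ε), φ' s ∂volume)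
        (𝓝[>] (0:ℝ)) (𝓝 0) := by
    intro t ht
    refine tendsto_of_tendsto_of_tendsto_of_le_of_le tendsto_const_nhds (hDφ t ht)
      (fun ε => zero_le) (fun ε => ?_)
    exact mul_le_mul_right (lintegral_mono fun s => hφ'le s) _
  -- to the real-valued primitive
  set g : ℝ → ℝ := fun s => (φ' s).toReal with hgdef
  have hg_int : Integrable g volume :=
    integrable_toReal_of_lintegral_ne_top mφ'.aemeasurable hφ'tot.ne
  have hφ'fin : ∀ᵐ s ∂(volume : Measure ℝ), φ' s < ⊤ := ae_lt_top mφ' hφ'tot.ne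
  -- key identity
  have key : ∀ a b : ℝ, a ≤ b →
      (∫ s in a..b, g s) = (∫⁻ s in Icc a b, φ' s ∂volume).toReal := by
    intro a b hab
    rw [intervalIntegral.integral_of_le hab,
      ← Measure.restrict_congr_set Ioc_ae_eq_Icc]
    exact integral_toReal mφ'.aemeasurable.restrict (ae_restrict_of_ae hφ'fin)
  set G : ℝ → ℝ := fun t => ∫ s in S..t, g s with hGdef
  have contG : Continuous G := hg_int.continuous_primitive S
  have hderiv : ∀ t ∈ Ico S T, HasDerivWithinAt G 0 (Ici t) t := by
    intro t ht
    rw [hasDerivWithinAt_iff_tendsto_slope, Ici_sdiff_left]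
    have hVfin : ∀ ε : ℝ, (∫⁻ s in Icc t (t + ε), φ' s ∂volume) ≠ ⊤ :=
      fun ε => ((setLIntegral_le_lintegral _ _).trans_lt hφ'tot).ne
    have h1 : Tendsto (fun ε : ℝ =>
        ((ENNReal.ofReal ε)⁻¹ * ∫⁻ s in Icc t (t + ε), φ' s ∂volume).toReal)
        (𝓝[>] (0:ℝ)) (𝓝 0) := by
      have := (ENNReal.tendsto_toReal (a := 0) (by simp)).comp (hDφ' t ht)
      simpa only [Function.comp_def, ENNReal.toReal_zero] using this
    have h2 : Tendsto (fun y : ℝ => y - t) (𝓝[>] t) (𝓝[>] (0:ℝ)) := by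
      apply tendsto_nhdsWithin_of_tendsto_nhds_of_eventually_within
      · have : Tendsto (fun y : ℝ => y - t) (𝓝 t) (𝓝 (t - t)) :=
          (continuous_id.sub continuous_const).tendsto t
        simpa using this.mono_left nhdsWithin_le_nhds
      · filter_upwards [self_mem_nhdsWithin] with y hy
        exact sub_pos.2 (mem_Ioi.mp hy)
    refine (h1.comp h2).congr' ?_
    filter_upwards [self_mem_nhdsWithin] with y hy
    have hyt : t < y := hy
    have hslope : slope G t y = (∫ s in t..y, g s) / (y - t) := by
      rw [slope_def_field]
      congr 1
      show G y - G t = _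
      rw [hGdef]
      exact intervalIntegral.integral_interval_sub_left
        (hg_int.intervalIntegrable) (hg_int.intervalIntegrable)
    have hty : t + (y - t) = y := by ring
    calc ((ENNReal.ofReal (y - t))⁻¹ *
          ∫⁻ s in Icc t (t + (y - t)), φ' s ∂volume).toReal
        = (y - t)⁻¹ * (∫⁻ s in Icc t y, φ' s ∂volume).toReal := by
          rw [hty, ENNReal.toReal_mul, ENNReal.toReal_inv,
            ENNReal.toReal_ofReal (sub_pos.2 hyt).le]
      _ = (∫ s in t..y, g s) / (y - t) := by
          rw [key t y hyt.le, div_eq_inv_mul]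
      _ = slope G t y := hslope.symm
  have hconst := constant_of_has_deriv_right_zero
    (f := G) (a := S) (b := T) contG.continuousOn hderiv
  have hGT : G T = 0 := by
    have := hconst T ⟨hST.le, le_rfl⟩
    rw [this]
    show (∫ s in S..S, g s) = 0
    exact intervalIntegral.integral_same
  have hIcc0 : (∫⁻ s in Icc S T, φ' s ∂volume) = 0 := by
    have h1 : (∫⁻ s in Icc S T, φ' s ∂volume).toReal = 0 := by
      rw [← key S T hST.le]; exact hGT
    rcases ENNReal.toReal_eq_zero_iff _ |>.mp h1 with h | h
    · exact h
    · exact absurd h (((setLIntegral_le_lintegral _ _).trans_lt hφ'tot).ne)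
  have hIccφ0 : (∫⁻ s in Icc S T, φ s ∂volume) = 0 := by
    rw [← hIcc0]
    refine setLIntegral_congr_fun measurableSet_Icc (fun s hs => ?_)
    exact (Set.indicator_of_mem hs φ).symm
  -- conclude
  have hprod0 : (∫⁻ q, ψ q ∂((volume.restrict (Icc S T)).prod P)) = 0 := by
    rw [lintegral_prod ψ mψ.aemeasurable]
    exact hIccφ0
  have hae := (lintegral_eq_zero_iff mψ).mp hprod0
  filter_upwards [hae] with q hq
  have h0 : ‖Z₁ q.1 q.2 - Z₂ q.1 q.2‖ = 0 := by
    have := ENNReal.ofReal_eq_zero.mp hq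
    exact le_antisymm this (norm_nonneg _)
  exact sub_eq_zero.mp (norm_eq_zero.mp h0)
end

section
/- Let 0 ≤ S < T < ∞, and let φ : [S,T] → L¹(Ω;ℝ) be Bochner integrable, identified with a jointly measurable process φ(s,ω). Fix a filtration (F_t) such that φ(t) is F_t-measurable for each t. Assume that for every t ∈ [S,T) and every nonnegative bounded F_t-measurable random variable ξ_t, liminf_{ε↓0} (1/ε) E[(∫_t^{t+ε} φ(s) ds) ξ_t] ≥ 0. Then φ(s,ω) ≥ 0 for Leb⊗P-a.e. (s,ω) ∈ [S,T] × Ω. -/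
open MeasureTheory Filter Set
open scoped Topology

namespace A5

variable {Ω : Type*} {mΩ : MeasurableSpace Ω}

/-- A "nice" process: jointly measurable, integrable on the product, and locally constant in
time around a.e. time point. -/
def Nice (P : Measure Ω) (S T : ℝ) (g : ℝ → Ω → ℝ) : Prop :=
  Measurable (Function.uncurry g) ∧
  Integrable (Function.uncurry g) ((volume.restrict (Icc S T)).prod P) ∧
  ∀ᵐ t ∂(volume : Measure ℝ), ∀ᶠ ε in 𝓝[>] (0:ℝ), ∀ s ∈ Icc t (t + ε), g s = g t

variable {P : Measure Ω} {S T : ℝ}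

lemma finT (S T : ℝ) : IsFiniteMeasure ((volume : Measure ℝ).restrict (Icc S T)) :=
  ⟨by rw [Measure.restrict_apply_univ]; exact measure_Icc_lt_top⟩

lemma Nice.zero : Nice P S T (fun _ _ => (0:ℝ)) := by
  refine ⟨measurable_const, ?_, ?_⟩
  · exact integrable_zero _ _ _
  · filter_upwards with t using Eventually.of_forall (fun ε s _ => rfl)

lemma Nice.const [IsFiniteMeasure P] (c : ℝ) : Nice P S T (fun _ _ => c) := by
  haveI := finT S T
  refine ⟨measurable_const, integrable_const c, ?_⟩
  filter_upwards with t using Eventually.of_forall (fun ε s _ => rfl)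

lemma Nice.add {g₁ g₂ : ℝ → Ω → ℝ} (h₁ : Nice P S T g₁) (h₂ : Nice P S T g₂) :
    Nice P S T (fun s ω => g₁ s ω + g₂ s ω) := by
  refine ⟨h₁.1.add h₂.1, h₁.2.1.add h₂.2.1, ?_⟩
  filter_upwards [h₁.2.2, h₂.2.2] with t ht₁ ht₂
  filter_upwards [ht₁, ht₂] with ε hε₁ hε₂ s hs
  funext ω; simp only [hε₁ s hs, hε₂ s hs]

lemma Nice.smul {g : ℝ → Ω → ℝ} (c : ℝ) (h : Nice P S T g) :
    Nice P S T (fun s ω => c * g s ω) := by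
  refine ⟨measurable_const.mul h.1, h.2.1.const_mul c, ?_⟩
  filter_upwards [h.2.2] with t ht
  filter_upwards [ht] with ε hε s hs
  funext ω; simp only [hε s hs]

lemma Nice.const_sub [IsFiniteMeasure P] {g : ℝ → Ω → ℝ} (h : Nice P S T g) :
    Nice P S T (fun s ω => 1 - g s ω) := by
  haveI := finT S T
  refine ⟨measurable_const.sub h.1, (integrable_const 1).sub h.2.1, ?_⟩
  filter_upwards [h.2.2] with t ht
  filter_upwards [ht] with ε hε s hs
  funext ω; simp only [hε s hs]

lemma Nice.finsetSum {ι : Type*} (s : Finset ι) (g : ι → ℝ → Ω → ℝ)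
    (h : ∀ i ∈ s, Nice P S T (g i)) :
    Nice P S T (fun x ω => ∑ i ∈ s, g i x ω) := by
  classical
  induction s using Finset.induction_on with
  | empty => simpa using Nice.zero
  | insert _ _ hx ih =>
    rename_i a s'
    simp only [Finset.sum_insert hx]
    exact (h a (Finset.mem_insert_self a s')).add
      (ih fun i hi => h i (Finset.mem_insert_of_mem hi))

-- locally constant scalar indicator of an interval
lemma eventually_indicator_const (a b : ℝ) :
    ∀ᵐ t ∂(volume : Measure ℝ), ∀ᶠ ε in 𝓝[>] (0:ℝ), ∀ s ∈ Icc t (t + ε),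
      (Ioo a b).indicator (fun _ => (1:ℝ)) s = (Ioo a b).indicator (fun _ => (1:ℝ)) t := by
  have hnull : (volume : Measure ℝ) ({a, b} : Set ℝ) = 0 :=
    (Set.finite_singleton b).insert a |>.measure_zero _
  filter_upwards [measure_eq_zero_iff_ae_notMem.mp hnull] with t ht
  simp only [mem_insert_iff, mem_singleton_iff, not_or] at ht
  rcases lt_trichotomy t a with hta | hta | hta
  · filter_upwards [Ioo_mem_nhdsGT_of_mem (⟨le_refl (0:ℝ), by linarith⟩ : (0:ℝ) ∈ Ico (0:ℝ) (a - t))]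
      with ε hε s hs
    have h1 : s ∉ Ioo a b := fun hmem => by
      have := hs.2; have := hε.2; exact absurd hmem.1 (by linarith)
    have h2 : t ∉ Ioo a b := fun hmem => absurd hmem.1 (not_lt.mpr hta.le)
    rw [indicator_of_notMem h1, indicator_of_notMem h2]
  · exact absurd hta ht.1
  · rcases lt_trichotomy t b with htb | htb | htb
    · filter_upwards [Ioo_mem_nhdsGT_of_mem (⟨le_refl (0:ℝ), by linarith⟩ : (0:ℝ) ∈ Ico (0:ℝ) (b - t))]
        with ε hε s hs
      have h1 : s ∈ Ioo a b := ⟨lt_of_lt_of_le hta hs.1, by have := hs.2; have := hε.2; linarith⟩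
      have h2 : t ∈ Ioo a b := ⟨hta, htb⟩
      rw [indicator_of_mem h1, indicator_of_mem h2]
    · exact absurd htb ht.2
    · refine Eventually.of_forall (fun ε s hs => ?_)
      have h1 : s ∉ Ioo a b := fun hmem => by have := hs.1; exact absurd hmem.2 (by linarith)
      have h2 : t ∉ Ioo a b := fun hmem => absurd hmem.2 (not_lt.mpr htb.le)
      rw [indicator_of_notMem h1, indicator_of_notMem h2]


lemma indicator_approx (P : Measure Ω) [IsProbabilityMeasure P] (S T : ℝ) :
    ∀ ⦃A : Set (ℝ × Ω)⦄, MeasurableSet A → ∀ δ : ℝ, 0 < δ →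
      ∃ g : ℝ → Ω → ℝ, Nice P S T g ∧
        ∫ p, ‖A.indicator (fun _ => (1:ℝ)) p - Function.uncurry g p‖
          ∂((volume.restrict (Icc S T)).prod P) ≤ δ := by
  haveI := finT S T
  set μpr := ((volume : Measure ℝ).restrict (Icc S T)).prod P with hμpr
  have hgenC : MeasurableSpace.generateFrom
      (⋃ (a : ℚ) (b : ℚ) (_ : a < b), {Ioo (a:ℝ) (b:ℝ)}) = (inferInstance : MeasurableSpace ℝ) :=
    Real.borel_eq_generateFrom_Ioo_rat.symm.trans (BorelSpace.measurable_eq (α := ℝ)).symm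
  have h_eq : (inferInstance : MeasurableSpace (ℝ × Ω)) = MeasurableSpace.generateFrom
      (image2 (· ×ˢ ·) (⋃ (a : ℚ) (b : ℚ) (_ : a < b), {Ioo (a:ℝ) (b:ℝ)})
        {s : Set Ω | MeasurableSet s}) := by
    refine (generateFrom_eq_prod hgenC MeasurableSpace.generateFrom_measurableSet
      ?_ isCountablySpanning_measurableSet).symm
    refine ⟨fun n => Ioo ((-(n+1) : ℚ) : ℝ) (((n+1) : ℚ) : ℝ), fun n => ?_, ?_⟩
    · simp only [mem_iUnion, mem_singleton_iff]
      exact ⟨-(n+1), n+1, by linarith [show (0:ℚ) < n+1 by positivity], rfl⟩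
    · ext x
      simp only [mem_iUnion, mem_Ioo, mem_univ, iff_true]
      obtain ⟨n, hn⟩ := exists_nat_gt |x|
      have := abs_lt.mp hn
      exact ⟨n, by push_cast; constructor <;> linarith⟩
  have h_pi : IsPiSystem (image2 (· ×ˢ ·)
      (⋃ (a : ℚ) (b : ℚ) (_ : a < b), {Ioo (a:ℝ) (b:ℝ)}) {s : Set Ω | MeasurableSet s}) :=
    Real.isPiSystem_Ioo_rat.prod MeasurableSpace.isPiSystem_measurableSet
  refine MeasurableSpace.induction_on_inter h_eq h_pi ?_ ?_ ?_ ?_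
  · -- empty
    intro δ hδ
    refine ⟨fun _ _ => 0, Nice.zero, ?_⟩
    simp only [indicator_empty, Function.uncurry]
    simpa using hδ.le
  · -- rectangles
    rintro _ ⟨U, hU, B, hB, rfl⟩ δ hδ
    simp only [mem_iUnion, mem_singleton_iff] at hU
    obtain ⟨a, b, hab, rfl⟩ := hU
    have hBm : MeasurableSet B := hB
    refine ⟨fun s ω => (Ioo (a:ℝ) (b:ℝ)).indicator (fun _ => (1:ℝ)) s *
      B.indicator (fun _ => (1:ℝ)) ω, ?_, ?_⟩
    · have key : Function.uncurry (fun s ω => (Ioo (a:ℝ) (b:ℝ)).indicator (fun _ => (1:ℝ)) s *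
          B.indicator (fun _ => (1:ℝ)) ω)
          = (Ioo (a:ℝ) (b:ℝ) ×ˢ B).indicator (fun _ => (1:ℝ)) := by
        funext p
        by_cases h1 : p.1 ∈ Ioo (a:ℝ) (b:ℝ) <;> by_cases h2 : p.2 ∈ B <;>
          simp [Function.uncurry, indicator_apply, h1, h2, Set.mem_prod]
      refine ⟨?_, ?_, ?_⟩
      · rw [key]; exact measurable_const.indicator (measurableSet_Ioo.prod hBm)
      · rw [key]; exact (integrable_const 1).indicator (measurableSet_Ioo.prod hBm)
      · filter_upwards [eventually_indicator_const (a:ℝ) (b:ℝ)] with t ht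
        filter_upwards [ht] with ε hε s hs
        funext ω; simp only [hε s hs]
    · have : ∀ p : ℝ × Ω, ‖(Ioo (a:ℝ) (b:ℝ) ×ˢ B).indicator (fun _ => (1:ℝ)) p -
          Function.uncurry (fun s ω => (Ioo (a:ℝ) (b:ℝ)).indicator (fun _ => (1:ℝ)) s *
            B.indicator (fun _ => (1:ℝ)) ω) p‖ = 0 := by
        intro p
        by_cases h1 : p.1 ∈ Ioo (a:ℝ) (b:ℝ) <;> by_cases h2 : p.2 ∈ B <;>
          simp [Function.uncurry, indicator_apply, h1, h2, Set.mem_prod]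
      rw [show (fun p => ‖(Ioo (a:ℝ) (b:ℝ) ×ˢ B).indicator (fun _ => (1:ℝ)) p -
          Function.uncurry (fun s ω => (Ioo (a:ℝ) (b:ℝ)).indicator (fun _ => (1:ℝ)) s *
            B.indicator (fun _ => (1:ℝ)) ω) p‖) = (fun _ => (0:ℝ)) from funext this]
      simpa using hδ.le
  · -- complement
    intro A hAm hQ δ hδ
    obtain ⟨g, hg, hb⟩ := hQ δ hδ
    refine ⟨fun s ω => 1 - g s ω, hg.const_sub, ?_⟩
    have hpt : ∀ p : ℝ × Ω, ‖Aᶜ.indicator (fun _ => (1:ℝ)) p -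
        Function.uncurry (fun s ω => 1 - g s ω) p‖ =
        ‖A.indicator (fun _ => (1:ℝ)) p - Function.uncurry g p‖ := by
      intro p
      by_cases hp : p ∈ A
      · rw [indicator_of_notMem (not_not_intro hp : p ∉ Aᶜ), indicator_of_mem hp]
        show ‖(0:ℝ) - (1 - g p.1 p.2)‖ = ‖1 - g p.1 p.2‖
        rw [zero_sub, norm_neg]
      · rw [indicator_of_mem (Set.mem_compl hp), indicator_of_notMem hp]
        show ‖(1:ℝ) - (1 - g p.1 p.2)‖ = ‖0 - g p.1 p.2‖
        rw [zero_sub, norm_neg]; congr 1; ring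
    calc ∫ p, ‖Aᶜ.indicator (fun _ => (1:ℝ)) p -
          Function.uncurry (fun s ω => 1 - g s ω) p‖ ∂μpr
        = ∫ p, ‖A.indicator (fun _ => (1:ℝ)) p - Function.uncurry g p‖ ∂μpr :=
          integral_congr_ae (Eventually.of_forall hpt)
      _ ≤ δ := hb
  · -- disjoint unions
    intro f hdisj hmeas hQ δ hδ
    have hsum : ∑' i, μpr (f i) ≠ ⊤ := by
      rw [← measure_iUnion hdisj hmeas]; exact measure_ne_top _ _
    have htail : Tendsto (fun N => ∑' k, μpr (f (k + N))) atTop (𝓝 0) :=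
      ENNReal.tendsto_sum_nat_add _ hsum
    obtain ⟨N, hN⟩ : ∃ N, ∑' k, μpr (f (k + N)) < ENNReal.ofReal (δ/2) :=
      (htail.eventually_lt_const (ENNReal.ofReal_pos.mpr (by positivity))).exists
    choose gs hgs hbs using fun i => hQ i (δ/(2*(N+1))) (by positivity)
    refine ⟨fun s ω => ∑ i ∈ Finset.range N, gs i s ω,
      Nice.finsetSum _ _ (fun i _ => hgs i), ?_⟩
    set tail : Set (ℝ × Ω) := ⋃ k, f (k + N) with htaildef
    have htm : MeasurableSet tail := MeasurableSet.iUnion fun k => hmeas (k + N)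
    have hpt : ∀ p : ℝ × Ω, ‖(⋃ i, f i).indicator (fun _ => (1:ℝ)) p -
        Function.uncurry (fun s ω => ∑ i ∈ Finset.range N, gs i s ω) p‖ ≤
        (∑ i ∈ Finset.range N, ‖(f i).indicator (fun _ => (1:ℝ)) p -
          Function.uncurry (gs i) p‖) + tail.indicator (fun _ => (1:ℝ)) p := by
      intro p
      have hid : (⋃ i, f i).indicator (fun _ => (1:ℝ)) p =
          (∑ i ∈ Finset.range N, (f i).indicator (fun _ => (1:ℝ)) p) +
          ((⋃ i, f i) \ ⋃ i ∈ Finset.range N, f i).indicator (fun _ => (1:ℝ)) p := by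
        by_cases hp : p ∈ ⋃ i, f i
        · obtain ⟨j, hj⟩ := mem_iUnion.mp hp
          have huniq : ∀ i, i ≠ j → p ∉ f i := fun i hij hpi =>
            Set.disjoint_left.mp (hdisj hij) hpi hj
          by_cases hjN : j < N
          · have hsum1 : (∑ i ∈ Finset.range N, (f i).indicator (fun _ => (1:ℝ)) p) = 1 := by
              rw [Finset.sum_eq_single_of_mem j (Finset.mem_range.mpr hjN)]
              · exact indicator_of_mem hj _
              · intro i _ hij
                exact indicator_of_notMem (huniq i hij) _
            have hdiffnot : p ∉ (⋃ i, f i) \ ⋃ i ∈ Finset.range N, f i := by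
              intro hd
              exact hd.2 (mem_iUnion₂.mpr ⟨j, Finset.mem_range.mpr hjN, hj⟩)
            rw [indicator_of_mem hp, hsum1, indicator_of_notMem hdiffnot]
            ring
          · have hsum0 : (∑ i ∈ Finset.range N, (f i).indicator (fun _ => (1:ℝ)) p) = 0 := by
              refine Finset.sum_eq_zero fun i hi => ?_
              have hi' := Finset.mem_range.mp hi
              exact indicator_of_notMem (huniq i (by omega)) _
            have hdiffmem : p ∈ (⋃ i, f i) \ ⋃ i ∈ Finset.range N, f i := by
              refine ⟨hp, fun hmem => ?_⟩
              obtain ⟨i, hiN, hpi⟩ := mem_iUnion₂.mp hmem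
              exact huniq i (by simp at hiN; omega) hpi
            rw [indicator_of_mem hp, hsum0, indicator_of_mem hdiffmem]
            ring
        · have h1 : ∀ i, p ∉ f i := fun i hpi => hp (mem_iUnion.mpr ⟨i, hpi⟩)
          have h2 : p ∉ (⋃ i, f i) \ ⋃ i ∈ Finset.range N, f i := fun hd => hp hd.1
          rw [indicator_of_notMem hp, indicator_of_notMem h2,
            Finset.sum_eq_zero fun i _ => indicator_of_notMem (h1 i) _]
          ring
      have hsub : (⋃ i, f i) \ (⋃ i ∈ Finset.range N, f i) ⊆ tail := by
        rintro x ⟨hx1, hx2⟩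
        obtain ⟨j, hj⟩ := mem_iUnion.mp hx1
        have hjN : N ≤ j := by
          by_contra hlt
          exact hx2 (mem_iUnion₂.mpr ⟨j, Finset.mem_range.mpr (by omega), hj⟩)
        exact mem_iUnion.mpr ⟨j - N, by rwa [Nat.sub_add_cancel hjN]⟩
      calc ‖(⋃ i, f i).indicator (fun _ => (1:ℝ)) p -
            Function.uncurry (fun s ω => ∑ i ∈ Finset.range N, gs i s ω) p‖
          = ‖(∑ i ∈ Finset.range N, ((f i).indicator (fun _ => (1:ℝ)) p -
              Function.uncurry (gs i) p)) +
              ((⋃ i, f i) \ ⋃ i ∈ Finset.range N, f i).indicator (fun _ => (1:ℝ)) p‖ := by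
            congr 1
            simp only [Function.uncurry_def]
            rw [hid, Finset.sum_sub_distrib]
            ring
        _ ≤ ‖∑ i ∈ Finset.range N, ((f i).indicator (fun _ => (1:ℝ)) p -
              Function.uncurry (gs i) p)‖ +
              ‖((⋃ i, f i) \ ⋃ i ∈ Finset.range N, f i).indicator (fun _ => (1:ℝ)) p‖ :=
            norm_add_le _ _
        _ ≤ (∑ i ∈ Finset.range N, ‖(f i).indicator (fun _ => (1:ℝ)) p -
              Function.uncurry (gs i) p‖) + tail.indicator (fun _ => (1:ℝ)) p := by
            refine add_le_add (norm_sum_le _ _) ?_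
            rw [Real.norm_eq_abs, abs_of_nonneg (indicator_nonneg (fun _ _ => zero_le_one) _)]
            exact indicator_le_indicator_of_subset hsub (fun _ => zero_le_one) _
    have hIu : Integrable ((⋃ i, f i).indicator (fun _ => (1:ℝ))) μpr :=
      (integrable_const 1).indicator (MeasurableSet.iUnion hmeas)
    have hIgs : ∀ i, Integrable (Function.uncurry (gs i)) μpr := fun i => (hgs i).2.1
    have hInorm : ∀ i, Integrable (fun p => ‖(f i).indicator (fun _ => (1:ℝ)) p -
        Function.uncurry (gs i) p‖) μpr := fun i =>
      (((integrable_const 1).indicator (hmeas i)).sub (hIgs i)).norm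
    have hItail : Integrable (tail.indicator (fun _ => (1:ℝ))) μpr :=
      (integrable_const 1).indicator htm
    have hLHSint : Integrable (fun p => ‖(⋃ i, f i).indicator (fun _ => (1:ℝ)) p -
        Function.uncurry (fun s ω => ∑ i ∈ Finset.range N, gs i s ω) p‖) μpr := by
      refine (hIu.sub ?_).norm
      exact integrable_finset_sum _ (fun i _ => hIgs i)
    calc ∫ p, ‖(⋃ i, f i).indicator (fun _ => (1:ℝ)) p -
          Function.uncurry (fun s ω => ∑ i ∈ Finset.range N, gs i s ω) p‖ ∂μpr
        ≤ ∫ p, ((∑ i ∈ Finset.range N, ‖(f i).indicator (fun _ => (1:ℝ)) p -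
            Function.uncurry (gs i) p‖) + tail.indicator (fun _ => (1:ℝ)) p) ∂μpr := by
          refine integral_mono hLHSint ?_ hpt
          exact (integrable_finset_sum _ (fun i _ => hInorm i)).add hItail
      _ = (∑ i ∈ Finset.range N, ∫ p, ‖(f i).indicator (fun _ => (1:ℝ)) p -
            Function.uncurry (gs i) p‖ ∂μpr) + ∫ p, tail.indicator (fun _ => (1:ℝ)) p ∂μpr := by
          rw [integral_add (integrable_finset_sum _ (fun i _ => hInorm i)) hItail,
            integral_finset_sum _ (fun i _ => hInorm i)]
      _ ≤ (∑ _i ∈ Finset.range N, δ/(2*(N+1))) + δ/2 := by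
          refine add_le_add (Finset.sum_le_sum fun i _ => hbs i) ?_
          rw [integral_indicator htm, setIntegral_const, smul_eq_mul, mul_one]
          refine ENNReal.toReal_le_of_le_ofReal (by positivity) ?_
          exact le_of_lt (lt_of_le_of_lt (measure_iUnion_le _) hN)
      _ ≤ δ/2 + δ/2 := by
          refine add_le_add ?_ le_rfl
          rw [Finset.sum_const, Finset.card_range, nsmul_eq_mul]
          calc (N:ℝ) * (δ/(2*(N+1))) ≤ ((N:ℝ)+1) * (δ/(2*(N+1))) := by
                refine mul_le_mul_of_nonneg_right (by linarith) (by positivity)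
            _ = δ/2 := by field_simp
      _ = δ := by ring

lemma fun_approx (P : Measure Ω) [IsProbabilityMeasure P] (S T : ℝ) :
    ∀ ⦃f : ℝ × Ω → ℝ⦄, Integrable f ((volume.restrict (Icc S T)).prod P) →
    ∀ δ : ℝ, 0 < δ → ∃ g : ℝ → Ω → ℝ, Nice P S T g ∧
      ∫ p, ‖f p - Function.uncurry g p‖ ∂((volume.restrict (Icc S T)).prod P) ≤ δ := by
  set μpr := ((volume : Measure ℝ).restrict (Icc S T)).prod P with hμpr
  refine Integrable.induction (μ := μpr)
    (fun f => ∀ δ : ℝ, 0 < δ → ∃ g : ℝ → Ω → ℝ, Nice P S T g ∧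
      ∫ p, ‖f p - Function.uncurry g p‖ ∂μpr ≤ δ) ?_ ?_ ?_ ?_
  · -- indicator
    intro c A hA _ δ hδ
    by_cases hc : c = 0
    · refine ⟨fun _ _ => 0, Nice.zero, ?_⟩
      subst hc
      simpa [Function.uncurry] using hδ.le
    · obtain ⟨g, hg, hb⟩ := indicator_approx P S T hA (δ / |c|) (div_pos hδ (abs_pos.mpr hc))
      refine ⟨fun s' ω => c * g s' ω, Nice.smul c hg, ?_⟩
      have hpt : ∀ p : ℝ × Ω, ‖A.indicator (fun _ => c) p -
          Function.uncurry (fun s' ω => c * g s' ω) p‖ =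
          |c| * ‖A.indicator (fun _ => (1:ℝ)) p - Function.uncurry g p‖ := by
        intro p
        by_cases hp : p ∈ A
        · rw [indicator_of_mem hp, indicator_of_mem hp]
          show ‖c - c * g p.1 p.2‖ = |c| * ‖(1:ℝ) - g p.1 p.2‖
          rw [show c - c * g p.1 p.2 = c * (1 - g p.1 p.2) by ring, Real.norm_eq_abs,
            Real.norm_eq_abs, abs_mul]
        · rw [indicator_of_notMem hp, indicator_of_notMem hp]
          show ‖0 - c * g p.1 p.2‖ = |c| * ‖(0:ℝ) - g p.1 p.2‖
          rw [show (0:ℝ) - c * g p.1 p.2 = c * (0 - g p.1 p.2) by ring, Real.norm_eq_abs,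
            Real.norm_eq_abs, abs_mul]
      calc ∫ p, ‖A.indicator (fun _ => c) p -
            Function.uncurry (fun s' ω => c * g s' ω) p‖ ∂μpr
          = ∫ p, |c| * ‖A.indicator (fun _ => (1:ℝ)) p - Function.uncurry g p‖ ∂μpr :=
            integral_congr_ae (Eventually.of_forall hpt)
        _ = |c| * ∫ p, ‖A.indicator (fun _ => (1:ℝ)) p - Function.uncurry g p‖ ∂μpr :=
            integral_const_mul _ _
        _ ≤ |c| * (δ / |c|) := mul_le_mul_of_nonneg_left hb (abs_nonneg c)
        _ = δ := by field_simp
  · -- add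
    intro f₁ f₂ _ hi₁ hi₂ hP₁ hP₂ δ hδ
    obtain ⟨g₁, hg₁, hb₁⟩ := hP₁ (δ/2) (by positivity)
    obtain ⟨g₂, hg₂, hb₂⟩ := hP₂ (δ/2) (by positivity)
    refine ⟨fun s ω => g₁ s ω + g₂ s ω, hg₁.add hg₂, ?_⟩
    have hpt : ∀ p : ℝ × Ω, ‖(f₁ + f₂) p -
        Function.uncurry (fun s ω => g₁ s ω + g₂ s ω) p‖ ≤
        ‖f₁ p - Function.uncurry g₁ p‖ + ‖f₂ p - Function.uncurry g₂ p‖ := by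
      intro p
      have : (f₁ + f₂) p - Function.uncurry (fun s ω => g₁ s ω + g₂ s ω) p =
          (f₁ p - Function.uncurry g₁ p) + (f₂ p - Function.uncurry g₂ p) := by
        simp only [Pi.add_apply, Function.uncurry_def]; ring
      rw [this]
      exact norm_add_le _ _
    calc ∫ p, ‖(f₁ + f₂) p - Function.uncurry (fun s ω => g₁ s ω + g₂ s ω) p‖ ∂μpr
        ≤ ∫ p, (‖f₁ p - Function.uncurry g₁ p‖ + ‖f₂ p - Function.uncurry g₂ p‖) ∂μpr := by
          refine integral_mono ?_ ?_ hpt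
          · exact ((hi₁.add hi₂).sub (hg₁.2.1.add hg₂.2.1)).norm
          · exact ((hi₁.sub hg₁.2.1).norm).add ((hi₂.sub hg₂.2.1).norm)
      _ = (∫ p, ‖f₁ p - Function.uncurry g₁ p‖ ∂μpr) +
          ∫ p, ‖f₂ p - Function.uncurry g₂ p‖ ∂μpr :=
          integral_add ((hi₁.sub hg₁.2.1).norm) ((hi₂.sub hg₂.2.1).norm)
      _ ≤ δ/2 + δ/2 := add_le_add hb₁ hb₂
      _ = δ := by ring
  · -- closed
    refine isClosed_of_closure_subset fun f hf => ?_
    intro δ hδ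
    obtain ⟨f', hf'mem, hdist⟩ := Metric.mem_closure_iff.mp hf (δ/2) (by positivity)
    obtain ⟨g, hg, hb⟩ := hf'mem (δ/2) (by positivity)
    refine ⟨g, hg, ?_⟩
    have h1 : Integrable (⇑f) μpr := L1.integrable_coeFn f
    have h2 : Integrable (⇑f') μpr := L1.integrable_coeFn f'
    calc ∫ p, ‖f p - Function.uncurry g p‖ ∂μpr
        ≤ ∫ p, (‖f p - f' p‖ + ‖f' p - Function.uncurry g p‖) ∂μpr := by
          refine integral_mono ((h1.sub hg.2.1).norm)
            (((h1.sub h2).norm).add ((h2.sub hg.2.1).norm)) (fun p => ?_)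
          simpa [dist_eq_norm] using dist_triangle (f p) (f' p) (Function.uncurry g p)
      _ = (∫ p, ‖f p - f' p‖ ∂μpr) + ∫ p, ‖f' p - Function.uncurry g p‖ ∂μpr :=
          integral_add ((h1.sub h2).norm) ((h2.sub hg.2.1).norm)
      _ ≤ δ/2 + δ/2 := by
          refine add_le_add ?_ hb
          have : ∫ p, ‖f p - f' p‖ ∂μpr = dist f f' := by
            rw [L1.dist_eq_integral_dist]
            exact integral_congr_ae (Eventually.of_forall fun p => (dist_eq_norm _ _).symm)
          rw [this]
          exact hdist.le
      _ = δ := by ring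
  · -- ae congruence
    intro f₁ f₂ hae _ hP₁ δ hδ
    obtain ⟨g, hg, hb⟩ := hP₁ δ hδ
    refine ⟨g, hg, le_trans (le_of_eq ?_) hb⟩
    exact integral_congr_ae (hae.mono fun p hp => by simp only []; rw [← hp])

lemma mulBdd {α : Type*} {mα : MeasurableSpace α} {μ : Measure α} {f ξ : α → ℝ}
    (hf : Integrable f μ) (hξm : AEStronglyMeasurable ξ μ)
    (h0 : ∀ ω, 0 ≤ ξ ω) (h1 : ∀ ω, ξ ω ≤ 1) :
    Integrable (fun ω => f ω * ξ ω) μ := by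
  have h2 := hf.bdd_mul hξm (c := 1) (Eventually.of_forall fun ω => by
    rw [Real.norm_eq_abs, abs_of_nonneg (h0 ω)]; exact h1 ω)
  simpa [mul_comm] using h2

-- Lebesgue point property for right intervals, from the Vitali family machinery
lemma lebesgue_points {r' : ℝ → ℝ} (hr' : Integrable r' (volume : Measure ℝ)) :
    ∀ᵐ t ∂(volume : Measure ℝ),
      Tendsto (fun ε : ℝ => ⨍ s in Icc t (t+ε), ‖r' s - r' t‖ ∂volume) (𝓝[>] 0) (𝓝 0) := by
  filter_upwards [(IsUnifLocDoublingMeasure.vitaliFamily (volume : Measure ℝ) 1).ae_tendsto_average_norm_sub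
    hr'.locallyIntegrable] with t ht
  have h2 : Tendsto (fun ε : ℝ => t + ε) (𝓝[>] 0) (𝓝[>] t) := by
    have h3 : Tendsto (fun ε : ℝ => t + ε) (𝓝 0) (𝓝 t) := by
      simpa using (continuous_add_left t).tendsto' (0:ℝ) t (by simp)
    refine tendsto_nhdsWithin_of_tendsto_nhds_of_eventually_within _
      (h3.mono_left nhdsWithin_le_nhds) ?_
    filter_upwards [self_mem_nhdsWithin] with ε hε
    exact by simp only [mem_Ioi] at hε ⊢; linarith
  exact ht.comp ((Real.tendsto_Icc_vitaliFamily_right t).comp h2)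

-- convergence of the one-sided averages of r' on Ioc
lemma W_tendsto {r' : ℝ → ℝ} (hr' : Integrable r' (volume : Measure ℝ)) {t : ℝ}
    (hLt : Tendsto (fun ε : ℝ => ⨍ s in Icc t (t+ε), ‖r' s - r' t‖ ∂volume) (𝓝[>] 0) (𝓝 0)) :
    Tendsto (fun ε : ℝ => (1/ε) * ∫ s in Ioc t (t+ε), r' s ∂volume) (𝓝[>] 0) (𝓝 (r' t)) := by
  rw [← tendsto_sub_nhds_zero_iff]
  refine squeeze_zero_norm' ?_ hLt
  filter_upwards [self_mem_nhdsWithin] with ε hε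
  have hε0 : (0:ℝ) < ε := hε
  have hvol : volume (Ioc t (t+ε)) = ENNReal.ofReal ε := by
    rw [Real.volume_Ioc]; congr 1; ring
  have hvolIcc : volume (Icc t (t+ε)) = ENNReal.ofReal ε := by
    rw [Real.volume_Icc]; congr 1; ring
  have hIoc : IntegrableOn r' (Ioc t (t+ε)) volume := hr'.integrableOn
  have hconst : IntegrableOn (fun _ => r' t) (Ioc t (t+ε)) volume :=
    (integrableOn_const_iff).mpr (Or.inr (by rw [hvol]; exact ENNReal.ofReal_lt_top))
  have h1 : (1/ε) * (∫ s in Ioc t (t+ε), r' s ∂volume) - r' t =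
      (1/ε) * ∫ s in Ioc t (t+ε), (r' s - r' t) ∂volume := by
    rw [integral_sub hIoc hconst, setIntegral_const, measureReal_def, hvol,
      ENNReal.toReal_ofReal hε0.le, smul_eq_mul]
    field_simp
  rw [h1]
  have hIccInt : IntegrableOn (fun s => ‖r' s - r' t‖) (Icc t (t+ε)) volume :=
    ((hr'.integrableOn).sub ((integrableOn_const_iff).mpr
      (Or.inr (by rw [hvolIcc]; exact ENNReal.ofReal_lt_top)))).norm
  calc ‖(1/ε) * ∫ s in Ioc t (t+ε), (r' s - r' t) ∂volume‖
      = (1/ε) * ‖∫ s in Ioc t (t+ε), (r' s - r' t) ∂volume‖ := by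
        rw [Real.norm_eq_abs, abs_mul, abs_of_pos (by positivity)]; rfl
    _ ≤ (1/ε) * ∫ s in Ioc t (t+ε), ‖r' s - r' t‖ ∂volume := by
        exact mul_le_mul_of_nonneg_left (norm_integral_le_integral_norm _) (by positivity)
    _ ≤ (1/ε) * ∫ s in Icc t (t+ε), ‖r' s - r' t‖ ∂volume := by
        refine mul_le_mul_of_nonneg_left ?_ (by positivity)
        refine setIntegral_mono_set hIccInt ?_ ?_
        · exact Eventually.of_forall fun s => norm_nonneg _
        · exact HasSubset.Subset.eventuallyLE Ioc_subset_Icc_self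
    _ = ⨍ s in Icc t (t+ε), ‖r' s - r' t‖ ∂volume := by
        rw [setAverage_eq, measureReal_def, hvolIcc, ENNReal.toReal_ofReal hε0.le, smul_eq_mul, one_div]

lemma core_bound (P : Measure Ω) [IsProbabilityMeasure P] (F : MeasureTheory.Filtration ℝ mΩ)
    (S T : ℝ) (hST : S < T) (φ g : ℝ → Ω → ℝ)
    (hmeas : Measurable (Function.uncurry φ))
    (hadapted : ∀ t, Measurable[F t] (φ t))
    (hint : Integrable (Function.uncurry φ) ((volume.restrict (Icc S T)).prod P))
    (hg : Nice P S T g)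
    (h : ∀ t ∈ Ico S T, ∀ ξ : Ω → ℝ, Measurable[F t] ξ → (∀ ω, 0 ≤ ξ ω) →
      (∃ C : ℝ, ∀ ω, ξ ω ≤ C) →
      0 ≤ Filter.liminf
        (fun ε : ℝ => (1/ε) * ∫ ω, (∫ s in t..(t + ε), φ s ω) * ξ ω ∂P)
        (𝓝[>] (0:ℝ))) :
    ∀ᵐ t ∂(volume.restrict (Icc S T)),
      ∫ ω, max (-(φ t ω)) 0 ∂P ≤ 2 * ∫ ω, ‖φ t ω - g t ω‖ ∂P := by
  set μT := (volume : Measure ℝ).restrict (Icc S T) with hμT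
  set μpr := μT.prod P with hμpr
  set r : ℝ → ℝ := fun s => ∫ ω, ‖φ s ω - g s ω‖ ∂P with hrdef
  set r' : ℝ → ℝ := (Icc S T).indicator r with hr'def
  have hsubint : Integrable (fun p : ℝ × Ω => φ p.1 p.2 - g p.1 p.2) μpr := hint.sub hg.2.1
  have hrint : Integrable r μT := hsubint.integral_norm_prod_left
  have hr'int : Integrable r' (volume : Measure ℝ) := by
    rw [hr'def, integrable_indicator_iff measurableSet_Icc]
    exact hrint
  have hIoo : ∀ᵐ t ∂μT, t ∈ Ioo S T := by
    have h1 : ∀ᵐ t ∂μT, t ∈ Icc S T := ae_restrict_mem measurableSet_Icc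
    have h2 : ∀ᵐ t ∂μT, t ∉ ({S, T} : Set ℝ) :=
      ae_restrict_of_ae (measure_eq_zero_iff_ae_notMem.mp
        (((Set.finite_singleton T).insert S).measure_zero _))
    filter_upwards [h1, h2] with t ht1 ht2
    simp only [mem_insert_iff, mem_singleton_iff, not_or] at ht2
    exact ⟨lt_of_le_of_ne ht1.1 (Ne.symm ht2.1), lt_of_le_of_ne ht1.2 ht2.2⟩
  have hφsec : ∀ᵐ t ∂μT, Integrable (φ t) P := by
    filter_upwards [hint.prod_right_ae] with t ht using ht
  have hgsec : ∀ᵐ t ∂μT, Integrable (g t) P := by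
    filter_upwards [hg.2.1.prod_right_ae] with t ht using ht
  have hgconst : ∀ᵐ t ∂μT, ∀ᶠ ε in 𝓝[>](0:ℝ), ∀ s ∈ Icc t (t+ε), g s = g t :=
    ae_restrict_of_ae hg.2.2
  have hLebT : ∀ᵐ t ∂μT,
      Tendsto (fun ε : ℝ => ⨍ s in Icc t (t+ε), ‖r' s - r' t‖ ∂volume) (𝓝[>] 0) (𝓝 0) :=
    ae_restrict_of_ae (lebesgue_points hr'int)
  filter_upwards [hIoo, hφsec, hgsec, hgconst, hLebT] with t ht hφt hgt hgc hLt
  -- the indicator of the negativity set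
  set A : Set Ω := {ω | φ t ω < 0} with hAdef
  set ξ : Ω → ℝ := A.indicator (fun _ => (1:ℝ)) with hξdef
  have hAFt : MeasurableSet[F t] A := hadapted t measurableSet_Iio
  have hξFt : Measurable[F t] ξ := measurable_const.indicator hAFt
  have hξ0 : ∀ ω, 0 ≤ ξ ω := fun ω => indicator_nonneg (fun _ _ => zero_le_one) ω
  have hξ1 : ∀ ω, ξ ω ≤ 1 := fun ω => indicator_le_self' (fun _ _ => zero_le_one) ω
  have hξm : Measurable ξ := measurable_const.indicator (F.le t _ hAFt)
  have hliminf := h t ⟨ht.1.le, ht.2⟩ ξ hξFt hξ0 ⟨1, hξ1⟩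
  set c : ℝ := ∫ ω, g t ω * ξ ω ∂P with hcdef
  set W : ℝ → ℝ := fun ε => (1/ε) * ∫ s in Ioc t (t+ε), r' s ∂volume with hWdef
  have hW : Tendsto W (𝓝[>] 0) (𝓝 (r' t)) := W_tendsto hr'int hLt
  have hgtξ : Integrable (fun ω => g t ω * ξ ω) P :=
    mulBdd hgt hξm.aestronglyMeasurable hξ0 hξ1
  have hφtξ : Integrable (fun ω => φ t ω * ξ ω) P :=
    mulBdd hφt hξm.aestronglyMeasurable hξ0 hξ1
  -- the eventual two-sided bound
  have hveb : ∀ᶠ ε in 𝓝[>] (0:ℝ),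
      ((1/ε) * ∫ ω, (∫ s in t..(t + ε), φ s ω) * ξ ω ∂P) ≤ c + W ε ∧
      c - W ε ≤ (1/ε) * ∫ ω, (∫ s in t..(t + ε), φ s ω) * ξ ω ∂P := by
    have hTt : (0:ℝ) < T - t := by linarith [ht.2]
    filter_upwards [Ioo_mem_nhdsGT_of_mem (⟨le_refl (0:ℝ), hTt⟩ : (0:ℝ) ∈ Ico (0:ℝ) (T - t)),
      hgc] with ε hεm hgcε
    have hε0 : (0:ℝ) < ε := hεm.1
    have hsub : Ioc t (t+ε) ⊆ Icc S T := fun s hs =>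
      ⟨le_trans ht.1.le hs.1.le, le_trans hs.2 (by linarith [hεm.2])⟩
    have hJm : MeasurableSet (Ioc t (t+ε)) := measurableSet_Ioc
    have hprodJ : ((volume : Measure ℝ).restrict (Ioc t (t+ε))).prod P =
        μpr.restrict ((Ioc t (t+ε)) ×ˢ univ) := by
      have e0 : μpr.restrict ((Ioc t (t+ε)) ×ˢ univ) =
          (μT.restrict (Ioc t (t+ε))).prod (P.restrict univ) :=
        (Measure.prod_restrict _ _).symm
      rw [e0, Measure.restrict_univ, hμT, Measure.restrict_restrict hJm,
        inter_eq_self_of_subset_left hsub]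
    have hφJ0 : Integrable (fun p : ℝ × Ω => φ p.1 p.2)
        ((volume.restrict (Ioc t (t+ε))).prod P) := by
      rw [hprodJ]; exact hint.restrict
    have hφξJ : Integrable (fun p : ℝ × Ω => φ p.1 p.2 * ξ p.2)
        ((volume.restrict (Ioc t (t+ε))).prod P) :=
      mulBdd hφJ0 ((hξm.comp measurable_snd).aestronglyMeasurable)
        (fun p => hξ0 p.2) (fun p => hξ1 p.2)
    have hFub : ∫ ω, (∫ s in t..(t + ε), φ s ω) * ξ ω ∂P
        = ∫ s in Ioc t (t+ε), (∫ ω, φ s ω * ξ ω ∂P) ∂volume := by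
      have e1 : ∀ ω, (∫ s in t..(t+ε), φ s ω) * ξ ω
          = ∫ s in Ioc t (t+ε), φ s ω * ξ ω ∂volume := by
        intro ω
        rw [intervalIntegral.integral_of_le (by linarith : t ≤ t + ε)]
        exact (integral_mul_const (ξ ω) _).symm
      calc ∫ ω, (∫ s in t..(t+ε), φ s ω) * ξ ω ∂P
          = ∫ ω, ∫ s in Ioc t (t+ε), φ s ω * ξ ω ∂volume ∂P :=
            integral_congr_ae (Eventually.of_forall fun ω => e1 ω)
        _ = ∫ s in Ioc t (t+ε), ∫ ω, φ s ω * ξ ω ∂P ∂volume :=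
            integral_integral_swap hφξJ.swap
    have hu_int : Integrable (fun s => ∫ ω, φ s ω * ξ ω ∂P)
        (volume.restrict (Ioc t (t+ε))) := hφξJ.integral_prod_left
    have hrIcc : IntegrableOn r (Icc S T) volume := hrint
    have hrJ : IntegrableOn r (Ioc t (t+ε)) volume := hrIcc.mono_set hsub
    have hconstJ : IntegrableOn (fun _ => c) (Ioc t (t+ε)) volume :=
      (integrableOn_const_iff).mpr (Or.inr (by rw [Real.volume_Ioc]; exact ENNReal.ofReal_lt_top))
    have hvolJ : (volume (Ioc t (t+ε))).toReal = ε := by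
      rw [Real.volume_Ioc, ENNReal.toReal_ofReal (by linarith : (0:ℝ) ≤ t + ε - t)]
      ring
    have haes : ∀ᵐ s ∂(volume.restrict (Ioc t (t+ε))),
        c - r s ≤ (∫ ω, φ s ω * ξ ω ∂P) ∧ (∫ ω, φ s ω * ξ ω ∂P) ≤ c + r s := by
      filter_upwards [hφJ0.prod_right_ae, ae_restrict_mem hJm] with s hs hsJ
      have hgs : g s = g t := hgcε s (Ioc_subset_Icc_self hsJ)
      have hφs : Integrable (φ s) P := hs
      have hgsint : Integrable (g s) P := by rw [hgs]; exact hgt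
      have hdint : Integrable (fun ω => (φ s ω - g t ω) * ξ ω) P :=
        mulBdd (hφs.sub hgt) hξm.aestronglyMeasurable hξ0 hξ1
      have hnint : Integrable (fun ω => ‖φ s ω - g s ω‖) P := (hφs.sub hgsint).norm
      have e : ∫ ω, φ s ω * ξ ω ∂P = c + ∫ ω, (φ s ω - g t ω) * ξ ω ∂P := by
        rw [hcdef, ← integral_add hgtξ hdint]
        congr 1; funext ω; ring
      have habs : ∀ ω, |(φ s ω - g t ω) * ξ ω| ≤ ‖φ s ω - g s ω‖ := by
        intro ω
        rw [abs_mul, Real.norm_eq_abs, hgs]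
        calc |φ s ω - g t ω| * |ξ ω| ≤ |φ s ω - g t ω| * 1 := by
              refine mul_le_mul_of_nonneg_left ?_ (abs_nonneg _)
              rw [abs_of_nonneg (hξ0 ω)]; exact hξ1 ω
          _ = |φ s ω - g t ω| := mul_one _
      have hrs : r s = ∫ ω, ‖φ s ω - g s ω‖ ∂P := rfl
      have hup : ∫ ω, (φ s ω - g t ω) * ξ ω ∂P ≤ r s := by
        rw [hrs]
        exact integral_mono hdint hnint fun ω => le_trans (le_abs_self _) (habs ω)
      have hlo : -(r s) ≤ ∫ ω, (φ s ω - g t ω) * ξ ω ∂P := by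
        rw [hrs, ← integral_neg]
        exact integral_mono hnint.neg hdint fun ω =>
          le_trans (neg_le_neg (habs ω)) (neg_abs_le _)
      constructor
      · rw [e]; linarith
      · rw [e]; linarith
    have hle1 : ∫ s in Ioc t (t+ε), (∫ ω, φ s ω * ξ ω ∂P) ∂volume
        ≤ ∫ s in Ioc t (t+ε), (c + r s) ∂volume :=
      integral_mono_ae hu_int (hconstJ.add hrJ) (haes.mono fun s hh => hh.2)
    have hle2 : ∫ s in Ioc t (t+ε), (c - r s) ∂volume
        ≤ ∫ s in Ioc t (t+ε), (∫ ω, φ s ω * ξ ω ∂P) ∂volume :=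
      integral_mono_ae (hconstJ.sub hrJ) hu_int (haes.mono fun s hh => hh.1)
    have hrr' : ∫ s in Ioc t (t+ε), r s ∂volume = ∫ s in Ioc t (t+ε), r' s ∂volume :=
      setIntegral_congr_fun hJm (fun s hs => (indicator_of_mem (hsub hs) r).symm)
    have heqadd : ∫ s in Ioc t (t+ε), (c + r s) ∂volume
        = ε * c + ∫ s in Ioc t (t+ε), r' s ∂volume := by
      rw [integral_add hconstJ hrJ, setIntegral_const, smul_eq_mul, measureReal_def, hvolJ, hrr']
    have heqsub : ∫ s in Ioc t (t+ε), (c - r s) ∂volume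
        = ε * c - ∫ s in Ioc t (t+ε), r' s ∂volume := by
      rw [integral_sub hconstJ hrJ, setIntegral_const, smul_eq_mul, measureReal_def, hvolJ, hrr']
    have hWε : W ε = (1/ε) * ∫ s in Ioc t (t+ε), r' s ∂volume := rfl
    constructor
    · rw [hFub]
      calc (1/ε) * ∫ s in Ioc t (t+ε), (∫ ω, φ s ω * ξ ω ∂P) ∂volume
          ≤ (1/ε) * (ε * c + ∫ s in Ioc t (t+ε), r' s ∂volume) := by
            refine mul_le_mul_of_nonneg_left ?_ (by positivity)
            rw [← heqadd]; exact hle1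
        _ = c + W ε := by rw [hWε]; field_simp
    · rw [hFub]
      calc c - W ε
          = (1/ε) * (ε * c - ∫ s in Ioc t (t+ε), r' s ∂volume) := by
            rw [hWε]; field_simp
        _ ≤ (1/ε) * ∫ s in Ioc t (t+ε), (∫ ω, φ s ω * ξ ω ∂P) ∂volume := by
            refine mul_le_mul_of_nonneg_left ?_ (by positivity)
            rw [← heqsub]; exact hle2
  -- liminf comparison
  have hFle : Filter.liminf
      (fun ε : ℝ => (1/ε) * ∫ ω, (∫ s in t..(t + ε), φ s ω) * ξ ω ∂P) (𝓝[>] (0:ℝ))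
      ≤ c + r' t := by
    have hcW : Tendsto (fun ε => c + W ε) (𝓝[>] (0:ℝ)) (𝓝 (c + r' t)) :=
      tendsto_const_nhds.add hW
    have hcW' : Tendsto (fun ε => c - W ε) (𝓝[>] (0:ℝ)) (𝓝 (c - r' t)) :=
      tendsto_const_nhds.sub hW
    refine le_trans (liminf_le_liminf (hveb.mono fun ε hε => hε.1) ?_ ?_)
      (le_of_eq hcW.liminf_eq)
    · obtain ⟨b, hb⟩ := hcW'.isBoundedUnder_ge
      refine ⟨b, ?_⟩
      rw [eventually_map] at hb ⊢
      filter_upwards [hb, hveb] with ε h1 h2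
      exact le_trans h1 h2.2
    · exact hcW.isBoundedUnder_le.isCoboundedUnder_ge
  have h0le : (0:ℝ) ≤ c + r' t := le_trans hliminf hFle
  have hr't : r' t = r t := indicator_of_mem (Ioo_subset_Icc_self ht) r
  -- compare c with the integral against φ t
  have hcb : c ≤ (∫ ω, φ t ω * ξ ω ∂P) + r t := by
    have hdiffint : Integrable (fun ω => (g t ω - φ t ω) * ξ ω) P :=
      mulBdd (hgt.sub hφt) hξm.aestronglyMeasurable hξ0 hξ1
    have e : c - ∫ ω, φ t ω * ξ ω ∂P = ∫ ω, (g t ω - φ t ω) * ξ ω ∂P := by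
      rw [hcdef, ← integral_sub hgtξ hφtξ]
      congr 1; funext ω; ring
    have hle : ∫ ω, (g t ω - φ t ω) * ξ ω ∂P ≤ ∫ ω, ‖φ t ω - g t ω‖ ∂P := by
      refine integral_mono hdiffint (hφt.sub hgt).norm fun ω => ?_
      have h1 : (g t ω - φ t ω) * ξ ω ≤ |g t ω - φ t ω| * ξ ω :=
        mul_le_mul_of_nonneg_right (le_abs_self _) (hξ0 ω)
      have h2 : |g t ω - φ t ω| * ξ ω ≤ |g t ω - φ t ω| * 1 :=
        mul_le_mul_of_nonneg_left (hξ1 ω) (abs_nonneg _)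
      calc (g t ω - φ t ω) * ξ ω ≤ |g t ω - φ t ω| := by linarith
        _ = ‖φ t ω - g t ω‖ := by rw [Real.norm_eq_abs, abs_sub_comm]
    have : r t = ∫ ω, ‖φ t ω - g t ω‖ ∂P := rfl
    linarith
  have hφξ : ∫ ω, φ t ω * ξ ω ∂P = - ∫ ω, max (-(φ t ω)) 0 ∂P := by
    rw [← integral_neg]
    refine integral_congr_ae (Eventually.of_forall fun ω => ?_)
    show φ t ω * ξ ω = -(max (-(φ t ω)) 0)
    by_cases hω : ω ∈ A
    · have hξω : ξ ω = 1 := by rw [hξdef]; exact indicator_of_mem hω _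
      have hφω : φ t ω < 0 := hω
      rw [hξω, max_eq_left (by linarith : -(φ t ω) ≥ (0:ℝ))]
      ring
    · have hξω : ξ ω = 0 := by rw [hξdef]; exact indicator_of_notMem hω _
      have hφω : ¬ φ t ω < 0 := hω
      rw [hξω, max_eq_right (by push_neg at hφω; linarith : -(φ t ω) ≤ (0:ℝ))]
      ring
  rw [hr't] at h0le
  rw [hφξ] at hcb
  linarith

end A5

open MeasureTheory Filter Set A5
open scoped Topology

/-- Lemma A.5 of the paper: if `φ` is a Bochner-integrable adapted process on `[S,T]` and
for every `t ∈ [S,T)` and every nonnegative bounded `F_t`-measurable `ξ_t` one has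
`liminf_{ε↓0} (1/ε) E[(∫_t^{t+ε} φ(s) ds) ξ_t] ≥ 0`, then `φ ≥ 0` `Leb⊗P`-a.e. -/
theorem stmt5 {Ω : Type*} {mΩ : MeasurableSpace Ω} (P : Measure Ω) [IsProbabilityMeasure P]
    (F : MeasureTheory.Filtration ℝ mΩ)
    (S T : ℝ) (hS : 0 ≤ S) (hST : S < T)
    (φ : ℝ → Ω → ℝ)
    (hmeas : Measurable (Function.uncurry φ))
    (hadapted : ∀ t, Measurable[F t] (φ t))
    (hint : Integrable (Function.uncurry φ) ((volume.restrict (Icc S T)).prod P))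
    (h : ∀ t ∈ Ico S T, ∀ ξ : Ω → ℝ, Measurable[F t] ξ → (∀ ω, 0 ≤ ξ ω) →
      (∃ C : ℝ, ∀ ω, ξ ω ≤ C) →
      0 ≤ Filter.liminf
        (fun ε : ℝ => (1/ε) * ∫ ω, (∫ s in t..(t + ε), φ s ω) * ξ ω ∂P)
        (𝓝[>] (0:ℝ))) :
    ∀ᵐ q ∂((volume.restrict (Icc S T)).prod P), 0 ≤ φ q.1 q.2 := by
  haveI := finT S T
  set μT := (volume : Measure ℝ).restrict (Icc S T) with hμT
  set μpr := μT.prod P with hμpr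
  set np : ℝ × Ω → ℝ := fun p => max (-(φ p.1 p.2)) 0 with hnp
  have hnpmeas : Measurable np := by
    have : Measurable fun p : ℝ × Ω => φ p.1 p.2 := hmeas
    exact this.neg.max measurable_const
  have hnpint : Integrable np μpr := by
    refine Integrable.mono hint.norm hnpmeas.aestronglyMeasurable
      (Eventually.of_forall fun p => ?_)
    rw [Real.norm_eq_abs, abs_of_nonneg (le_max_right _ _)]
    calc max (-(φ p.1 p.2)) 0 ≤ |φ p.1 p.2| := max_le (neg_le_abs _) (abs_nonneg _)
      _ ≤ ‖‖Function.uncurry φ p‖‖ := by rw [norm_norm, Real.norm_eq_abs]; exact le_refl _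
  have hkey : ∀ δ : ℝ, 0 < δ → ∫ p, np p ∂μpr ≤ 2 * δ := by
    intro δ hδ
    obtain ⟨g, hg, hb⟩ := fun_approx P S T hint δ hδ
    have hptb := core_bound P F S T hST φ g hmeas hadapted hint hg h
    have hrint : Integrable (fun t => ∫ ω, ‖φ t ω - g t ω‖ ∂P) μT :=
      (hint.sub hg.2.1).integral_norm_prod_left
    have hnpsec : Integrable (fun t => ∫ ω, np (t, ω) ∂P) μT := hnpint.integral_prod_left
    calc ∫ p, np p ∂μpr = ∫ t, (∫ ω, np (t, ω) ∂P) ∂μT := integral_prod _ hnpint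
      _ ≤ ∫ t, 2 * ∫ ω, ‖φ t ω - g t ω‖ ∂P ∂μT := by
          refine integral_mono_ae hnpsec (hrint.const_mul 2) ?_
          filter_upwards [hptb] with t ht using ht
      _ = 2 * ∫ t, (∫ ω, ‖φ t ω - g t ω‖ ∂P) ∂μT := integral_const_mul _ _
      _ = 2 * ∫ p, ‖φ p.1 p.2 - g p.1 p.2‖ ∂μpr := by
          have hsub2 : Integrable (fun p : ℝ × Ω => ‖φ p.1 p.2 - g p.1 p.2‖) μpr :=
            (hint.sub hg.2.1).norm
          congr 1
          exact (integral_prod (fun p : ℝ × Ω => ‖φ p.1 p.2 - g p.1 p.2‖) hsub2).symm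
      _ ≤ 2 * δ := by
          have : ∫ p, ‖φ p.1 p.2 - g p.1 p.2‖ ∂μpr
              = ∫ p, ‖Function.uncurry φ p - Function.uncurry g p‖ ∂μpr := rfl
          rw [this]; linarith [hb]
  have hzero : ∫ p, np p ∂μpr = 0 := by
    refine le_antisymm ?_ (integral_nonneg fun p => le_max_right _ _)
    refine le_of_forall_pos_le_add fun η hη => ?_
    calc ∫ p, np p ∂μpr ≤ 2 * (η / 2) := hkey (η/2) (by positivity)
      _ = 0 + η := by ring
  have hae0 : np =ᵐ[μpr] 0 :=
    (integral_eq_zero_iff_of_nonneg (fun p => le_max_right _ _) hnpint).mp hzero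
  filter_upwards [hae0] with q hq
  have hq' : max (-(φ q.1 q.2)) 0 = 0 := hq
  have := max_eq_right_iff.mp hq'
  linarith
end

section
/- Let 0 ≤ S < T < ∞, p, q ≥ 1, let H be a Euclidean space, and let Z : [S,T]² × Ω → H be such that t ↦ Z(t,·) is continuously differentiable as a map [S,T] → L^{p,q}_F(S,T;H) with derivative ∂_t Z. Define Diag[Z](s,ω) := Z(S,s,ω) + ∫_S^s ∂_t Z(τ,s,ω) dτ (set to 0 when the inner integral is not defined). Then Diag[Z] ∈ L^{p,q}_F(S,T;H) with the estimate ‖Diag[Z]‖_{L^{p,q}} ≤ ‖Z(S,·)‖_{L^{p,q}} + (T−S) sup_{t∈[S,T]} ‖∂_t Z(t,·)‖_{L^{p,q}}. -/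
open MeasureTheory Filter Set ENNReal
open scoped Topology

noncomputable section
set_option maxHeartbeats 1000000

lemma aux_iSup_min (a : ℝ≥0∞) : (⨆ n : ℕ, min a (n : ℝ≥0∞)) = a := by
  refine le_antisymm (iSup_le fun n => min_le_left _ _) ?_
  rcases eq_or_ne a ⊤ with h | h
  · subst h
    calc (⊤ : ℝ≥0∞) = ⨆ n : ℕ, (n : ℝ≥0∞) := ENNReal.iSup_natCast.symm
    _ ≤ ⨆ n : ℕ, min ⊤ (n : ℝ≥0∞) := by simp
  · obtain ⟨n, hn⟩ := ENNReal.exists_nat_gt h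
    exact le_trans (le_of_eq (min_eq_left hn.le).symm) (le_iSup (fun n : ℕ => min a n) n)

lemma aux_rpow_iSup {c : ℕ → ℝ≥0∞} (hc : Monotone c) {r : ℝ} (hr : 0 ≤ r) :
    (⨆ n, c n) ^ r = ⨆ n, c n ^ r := by
  have h1 : Tendsto c atTop (𝓝 (⨆ n, c n)) := tendsto_atTop_iSup hc
  have h2 : Tendsto (fun n => c n ^ r) atTop (𝓝 ((⨆ n, c n) ^ r)) :=
    (ENNReal.continuous_rpow_const.tendsto _).comp h1
  have h3 : Tendsto (fun n => c n ^ r) atTop (𝓝 (⨆ n, c n ^ r)) :=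
    tendsto_atTop_iSup fun i j hij => ENNReal.rpow_le_rpow (hc hij) hr
  exact tendsto_nhds_unique h2 h3

/-- Minkowski's integral inequality for `ℝ≥0∞`-valued functions. -/
theorem minkowski_lintegral {α β : Type*} [MeasurableSpace α] [MeasurableSpace β]
    (μ : Measure α) (ν : Measure β) [SFinite μ] [IsFiniteMeasure ν]
    {r : ℝ} (hr : 1 ≤ r) {f : α → β → ℝ≥0∞}
    (hf : Measurable (Function.uncurry f)) :
    (∫⁻ y, (∫⁻ x, f x y ∂μ) ^ r ∂ν) ^ (1/r) ≤ ∫⁻ x, (∫⁻ y, (f x y) ^ r ∂ν) ^ (1/r) ∂μ := by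
  have hr0 : 0 < r := lt_of_lt_of_le one_pos hr
  rcases eq_or_lt_of_le hr with h1 | h1
  · subst h1
    simp only [one_div_one, ENNReal.rpow_one]
    exact le_of_eq (lintegral_lintegral_swap hf.aemeasurable).symm
  have hconj : r.HolderConjugate (r / (r - 1)) := Real.HolderConjugate.conjExponent h1
  set r' : ℝ := r / (r - 1) with hr'def
  have hr'0 : 0 < r' := hconj.symm.pos
  set F : β → ℝ≥0∞ := fun y => ∫⁻ x, f x y ∂μ with hFdef
  have hFmeas : Measurable F := hf.lintegral_prod_left
  set A := ∫⁻ x, (∫⁻ y, (f x y) ^ r ∂ν) ^ (1/r) ∂μ with hA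
  -- measurability helpers
  have hfr : Measurable fun z : α × β => f z.1 z.2 ^ r :=
    ENNReal.continuous_rpow_const.measurable.comp hf
  have hgmeas : Measurable fun x => (∫⁻ y, (f x y) ^ r ∂ν) ^ (1/r) :=
    ENNReal.continuous_rpow_const.measurable.comp (Measurable.lintegral_prod_right' hfr)
  have key : ∀ n : ℕ, (∫⁻ y, (min (F y) n) ^ r ∂ν) ^ (1/r) ≤ A := by
    intro n
    set B := ∫⁻ y, (min (F y) n) ^ r ∂ν with hB
    have hBtop : B ≠ ⊤ := by
      have hle : B ≤ (n : ℝ≥0∞) ^ r * ν univ := by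
        calc B ≤ ∫⁻ _, (n : ℝ≥0∞) ^ r ∂ν :=
              lintegral_mono fun y => ENNReal.rpow_le_rpow (min_le_right _ _) hr0.le
        _ = (n : ℝ≥0∞) ^ r * ν univ := lintegral_const _
      exact (lt_of_le_of_lt hle
        (ENNReal.mul_lt_top (ENNReal.rpow_lt_top_of_nonneg hr0.le (natCast_ne_top n))
          (measure_lt_top ν univ))).ne
    rcases eq_or_ne B 0 with hB0 | hB0
    · rw [hB0, ENNReal.zero_rpow_of_pos (by positivity)]; exact zero_le
    have hminmeas : Measurable fun y => min (F y) (n : ℝ≥0∞) := hFmeas.min measurable_const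
    have hminrm1 : Measurable fun y => (min (F y) (n : ℝ≥0∞)) ^ (r - 1) :=
      ENNReal.continuous_rpow_const.measurable.comp hminmeas
    have step : B ≤ A * B ^ (1/r') := by
      have e1 : ∀ y, (min (F y) (n:ℝ≥0∞)) ^ r
          = (min (F y) (n:ℝ≥0∞)) ^ (r - 1) * min (F y) (n:ℝ≥0∞) := by
        intro y
        have h := ENNReal.rpow_add_of_nonneg (x := min (F y) (n:ℝ≥0∞)) (r - 1) 1
          (by linarith) zero_le_one
        rw [sub_add_cancel] at h
        rw [h, ENNReal.rpow_one]
      have e2 : ∀ y, ((min (F y) (n:ℝ≥0∞)) ^ (r - 1)) ^ r' = (min (F y) (n:ℝ≥0∞)) ^ r := by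
        intro y
        rw [← ENNReal.rpow_mul, hconj.sub_one_mul_conj]
      calc B = ∫⁻ y, (min (F y) (n:ℝ≥0∞)) ^ (r - 1) * min (F y) (n:ℝ≥0∞) ∂ν := by
            simp only [hB]; exact lintegral_congr e1
      _ ≤ ∫⁻ y, (min (F y) (n:ℝ≥0∞)) ^ (r - 1) * F y ∂ν :=
            lintegral_mono fun y => mul_le_mul_right (min_le_left _ _) _
      _ = ∫⁻ y, ∫⁻ x, (min (F y) (n:ℝ≥0∞)) ^ (r - 1) * f x y ∂μ ∂ν := by
            refine lintegral_congr fun y => ?_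
            exact (lintegral_const_mul _
              (show Measurable fun x => f x y from hf.comp measurable_prodMk_right)).symm
      _ = ∫⁻ x, ∫⁻ y, (min (F y) (n:ℝ≥0∞)) ^ (r - 1) * f x y ∂ν ∂μ := by
            refine (lintegral_lintegral_swap ?_).symm
            exact ((hminrm1.comp measurable_snd).mul hf).aemeasurable
      _ ≤ ∫⁻ x, (∫⁻ y, (f x y) ^ r ∂ν) ^ (1/r)
            * (∫⁻ y, ((min (F y) (n:ℝ≥0∞)) ^ (r - 1)) ^ r' ∂ν) ^ (1/r') ∂μ := by
            refine lintegral_mono fun x => ?_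
            have hhx : Measurable fun y => f x y := hf.comp measurable_prodMk_left
            have hH := ENNReal.lintegral_mul_le_Lp_mul_Lq ν hconj
              hhx.aemeasurable hminrm1.aemeasurable
            calc ∫⁻ y, (min (F y) (n:ℝ≥0∞)) ^ (r - 1) * f x y ∂ν
                = ∫⁻ y, f x y * (min (F y) (n:ℝ≥0∞)) ^ (r - 1) ∂ν :=
                  lintegral_congr fun y => mul_comm _ _
            _ ≤ _ := hH
      _ = A * B ^ (1/r') := by
            have : ∀ x, (∫⁻ y, (f x y) ^ r ∂ν) ^ (1/r)
                * (∫⁻ y, ((min (F y) (n:ℝ≥0∞)) ^ (r - 1)) ^ r' ∂ν) ^ (1/r')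
                = (∫⁻ y, (f x y) ^ r ∂ν) ^ (1/r) * B ^ (1/r') := by
              intro x
              congr 2
              exact lintegral_congr e2
            rw [lintegral_congr this, lintegral_mul_const _ hgmeas]
    have hsum : 1/r + 1/r' = 1 := by
      have := hconj.inv_add_inv_eq_inv
      simpa [one_div] using this
    calc B ^ (1/r) = B * B ^ (-(1/r')) := by
          rw [show (1:ℝ)/r = 1 + -(1/r') by linarith,
            ENNReal.rpow_add _ _ hB0 hBtop, ENNReal.rpow_one]
    _ ≤ (A * B ^ (1/r')) * B ^ (-(1/r')) := mul_le_mul_left step _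
    _ = A * (B ^ (1/r') * B ^ (-(1/r'))) := mul_assoc _ _ _
    _ = A := by
          rw [← ENNReal.rpow_add _ _ hB0 hBtop]
          simp
  -- monotone convergence
  have hmono : ∀ y, Monotone fun n : ℕ => (min (F y) (n:ℝ≥0∞)) ^ r := fun y i j hij =>
    ENNReal.rpow_le_rpow (min_le_min le_rfl (by exact_mod_cast Nat.cast_le.mpr hij)) hr0.le
  have hFr : ∀ y, (F y) ^ r = ⨆ n : ℕ, (min (F y) (n:ℝ≥0∞)) ^ r := by
    intro y
    rw [← aux_rpow_iSup (fun i j hij => min_le_min le_rfl (by exact_mod_cast Nat.cast_le.mpr hij)) hr0.le,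
      aux_iSup_min]
  calc (∫⁻ y, F y ^ r ∂ν) ^ (1/r)
      = (∫⁻ y, ⨆ n : ℕ, (min (F y) (n:ℝ≥0∞)) ^ r ∂ν) ^ (1/r) := by
        refine congrArg (· ^ (1/r)) (lintegral_congr hFr)
  _ = (⨆ n : ℕ, ∫⁻ y, (min (F y) (n:ℝ≥0∞)) ^ r ∂ν) ^ (1/r) := by
        rw [lintegral_iSup
          (fun n => show Measurable fun y => (min (F y) (n:ℝ≥0∞)) ^ r from
            ENNReal.continuous_rpow_const.measurable.comp (hFmeas.min measurable_const))
          (fun i j hij y => hmono y hij)]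
  _ = ⨆ n : ℕ, (∫⁻ y, (min (F y) (n:ℝ≥0∞)) ^ r ∂ν) ^ (1/r) :=
        aux_rpow_iSup (fun i j hij => lintegral_mono fun y => hmono y hij) (by positivity)
  _ ≤ A := iSup_le key


lemma meas_rpow_aux {α : Type*} [MeasurableSpace α] {f : α → ℝ≥0∞} (hf : Measurable f)
    (r : ℝ) : Measurable fun x => f x ^ r := by
  change Measurable ((fun y : ℝ≥0∞ => y ^ r) ∘ f)
  exact ENNReal.continuous_rpow_const.measurable.comp hf

/-- The `L^{p,q}_F(S,T;H)` norm `E[(∫_S^T |z(s)|^q ds)^{p/q}]^{1/p}` (in `ℝ≥0∞`). -/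
def LpqNorm {Ω : Type*} [MeasurableSpace Ω] (P : Measure Ω) (S T p q : ℝ)
    {n : ℕ} (z : ℝ → Ω → EuclideanSpace ℝ (Fin n)) : ℝ≥0∞ :=
  (∫⁻ ω, (∫⁻ s in Icc S T, (ENNReal.ofReal ‖z s ω‖) ^ q ∂volume) ^ (p/q) ∂P) ^ (1/p)

/-- Lemma 2.6 (i) of the paper: if `t ↦ Z(t,·)` is continuously differentiable from `[S,T]`
into `L^{p,q}_F(S,T;H)` with derivative `∂_t Z`, then the diagonal process
`Diag[Z](s) = Z(S,s) + ∫_S^s ∂_t Z(τ,s) dτ` belongs to `L^{p,q}_F(S,T;H)` with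
`‖Diag[Z]‖ ≤ ‖Z(S,·)‖ + (T−S)·sup_t ‖∂_t Z(t,·)‖`. -/
theorem stmt6 {Ω : Type*} {mΩ : MeasurableSpace Ω} (P : Measure Ω) [IsProbabilityMeasure P]
    (F : MeasureTheory.Filtration ℝ mΩ)
    {n : ℕ} (S T p q : ℝ) (hS : 0 ≤ S) (hST : S < T) (hp : 1 ≤ p) (hq : 1 ≤ q)
    (Z dZ : ℝ → ℝ → Ω → EuclideanSpace ℝ (Fin n))
    (hZmeas : Measurable (fun x : (ℝ × ℝ) × Ω => Z x.1.1 x.1.2 x.2))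
    (hdZmeas : Measurable (fun x : (ℝ × ℝ) × Ω => dZ x.1.1 x.1.2 x.2))
    (hZprog : ∀ t, ProgMeasurable F (Z t))
    (hdZprog : ∀ τ, ProgMeasurable F (dZ τ))
    (hZint : ∀ t ∈ Icc S T, LpqNorm P S T p q (Z t) < ⊤)
    (hdZint : ∀ τ ∈ Icc S T, LpqNorm P S T p q (dZ τ) < ⊤)
    -- `t ↦ Z(t,·)` has derivative `dZ` in the Banach space `L^{p,q}` (fundamental theorem
    -- of calculus form):
    (hFTC : ∀ t₁ ∈ Icc S T, ∀ t₂ ∈ Icc S T,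
      ∀ᵐ x ∂((volume.restrict (Icc S T)).prod P),
        Z t₁ x.1 x.2 - Z t₂ x.1 x.2 = ∫ τ in t₂..t₁, dZ τ x.1 x.2)
    -- the derivative is continuous in `t` as an `L^{p,q}`-valued map:
    (hdZcont : ∀ τ₀ ∈ Icc S T,
      Tendsto (fun τ => LpqNorm P S T p q (fun s ω => dZ τ s ω - dZ τ₀ s ω))
        (𝓝[Icc S T] τ₀) (𝓝 0))
    -- `M` is a bound for the norms of the derivative:
    (M : ℝ≥0∞) (hM : ∀ τ ∈ Icc S T, LpqNorm P S T p q (dZ τ) ≤ M)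
    (Diag : ℝ → Ω → EuclideanSpace ℝ (Fin n))
    (hDiag : ∀ s ω, Diag s ω = Z S s ω + ∫ τ in S..s, dZ τ s ω) :
    LpqNorm P S T p q Diag ≤ LpqNorm P S T p q (Z S) + ENNReal.ofReal (T - S) * M := by
  have hp0 : 0 < p := lt_of_lt_of_le one_pos hp
  have hq0 : 0 < q := lt_of_lt_of_le one_pos hq
  haveI hfinI : IsFiniteMeasure (volume.restrict (Icc S T)) :=
    ⟨by rw [Measure.restrict_apply_univ]; exact measure_Icc_lt_top⟩
  -- basic measurability
  have hzm : Measurable fun x : (ℝ × ℝ) × Ω => ENNReal.ofReal ‖Z x.1.1 x.1.2 x.2‖ :=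
    ENNReal.measurable_ofReal.comp hZmeas.norm
  have hdm : Measurable fun x : (ℝ × ℝ) × Ω => ENNReal.ofReal ‖dZ x.1.1 x.1.2 x.2‖ :=
    ENNReal.measurable_ofReal.comp hdZmeas.norm
  have humeas : Measurable fun x : ℝ × Ω => ENNReal.ofReal ‖Z S x.1 x.2‖ := by
    change Measurable ((fun x : (ℝ × ℝ) × Ω => ENNReal.ofReal ‖Z x.1.1 x.1.2 x.2‖) ∘
      (fun x : ℝ × Ω => ((S, x.1), x.2)))
    exact hzm.comp ((measurable_const.prodMk measurable_fst).prodMk measurable_snd)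
  have hdm2 : Measurable (Function.uncurry
      fun τ (x : ℝ × Ω) => ENNReal.ofReal ‖dZ τ x.1 x.2‖) := by
    change Measurable ((fun x : (ℝ × ℝ) × Ω => ENNReal.ofReal ‖dZ x.1.1 x.1.2 x.2‖) ∘
      (fun z : ℝ × (ℝ × Ω) => ((z.1, z.2.1), z.2.2)))
    exact hdm.comp ((measurable_fst.prodMk (measurable_fst.comp measurable_snd)).prodMk
      (measurable_snd.comp measurable_snd))
  have hGmeas : Measurable fun x : ℝ × Ω =>
      ∫⁻ τ in Icc S T, ENNReal.ofReal ‖dZ τ x.1 x.2‖ ∂volume :=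
    Measurable.lintegral_prod_left hdm2
  -- pointwise bound on the diagonal
  have hpt : ∀ ω, ∀ s ∈ Icc S T, ENNReal.ofReal ‖Diag s ω‖ ≤
      ENNReal.ofReal ‖Z S s ω‖ + ∫⁻ τ in Icc S T, ENNReal.ofReal ‖dZ τ s ω‖ ∂volume := by
    intro ω s hs
    rw [hDiag]
    have hsub : ENNReal.ofReal ‖∫ τ in S..s, dZ τ s ω‖ ≤
        ∫⁻ τ in Icc S T, ENNReal.ofReal ‖dZ τ s ω‖ ∂volume := by
      rw [intervalIntegral.integral_of_le hs.1, ofReal_norm]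
      calc (‖∫ τ in Ioc S s, dZ τ s ω ∂volume‖₊ : ℝ≥0∞)
          ≤ ∫⁻ τ in Ioc S s, (‖dZ τ s ω‖₊ : ℝ≥0∞) ∂volume :=
            enorm_integral_le_lintegral_enorm _
      _ ≤ ∫⁻ τ in Icc S T, (‖dZ τ s ω‖₊ : ℝ≥0∞) ∂volume :=
            lintegral_mono_set (fun x hx => ⟨hx.1.le, hx.2.trans hs.2⟩)
      _ = ∫⁻ τ in Icc S T, ENNReal.ofReal ‖dZ τ s ω‖ ∂volume :=
            lintegral_congr fun τ => (ofReal_norm _).symm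
    calc ENNReal.ofReal ‖Z S s ω + ∫ τ in S..s, dZ τ s ω‖
        ≤ ENNReal.ofReal (‖Z S s ω‖ + ‖∫ τ in S..s, dZ τ s ω‖) :=
          ENNReal.ofReal_le_ofReal (norm_add_le _ _)
    _ ≤ ENNReal.ofReal ‖Z S s ω‖ + ENNReal.ofReal ‖∫ τ in S..s, dZ τ s ω‖ :=
          ENNReal.ofReal_add_le
    _ ≤ _ := add_le_add le_rfl hsub
  set G : ℝ → Ω → ℝ≥0∞ := fun s ω => ∫⁻ τ in Icc S T, ENNReal.ofReal ‖dZ τ s ω‖ ∂volume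
    with hGdef
  -- step A : monotonicity
  have stepA : LpqNorm P S T p q Diag ≤
      (∫⁻ ω, (∫⁻ s in Icc S T, (ENNReal.ofReal ‖Z S s ω‖ + G s ω) ^ q ∂volume) ^ (p/q) ∂P)
        ^ (1/p) := by
    rw [LpqNorm]
    refine ENNReal.rpow_le_rpow (lintegral_mono fun ω => ENNReal.rpow_le_rpow ?_ (by positivity))
      (by positivity)
    exact setLIntegral_mono' measurableSet_Icc fun s hs =>
      ENNReal.rpow_le_rpow (hpt ω s hs) hq0.le
  -- rpow algebra helper
  have hpow : ∀ x : ℝ≥0∞, x ^ (p/q) = (x ^ (1/q)) ^ p := by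
    intro x
    rw [← ENNReal.rpow_mul]
    congr 1
    field_simp
  -- step B : triangle inequality
  set Au : Ω → ℝ≥0∞ := fun ω =>
    (∫⁻ s in Icc S T, (ENNReal.ofReal ‖Z S s ω‖) ^ q ∂volume) ^ (1/q) with hAu
  set Ag : Ω → ℝ≥0∞ := fun ω => (∫⁻ s in Icc S T, (G s ω) ^ q ∂volume) ^ (1/q) with hAg
  have hAumeas : Measurable Au :=
    meas_rpow_aux (Measurable.lintegral_prod_left (f := fun s ω =>
      (ENNReal.ofReal ‖Z S s ω‖) ^ q) (meas_rpow_aux humeas q)) (1/q)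
  have hAgmeas : Measurable Ag :=
    meas_rpow_aux (Measurable.lintegral_prod_left (f := fun s ω => (G s ω) ^ q)
      (meas_rpow_aux hGmeas q)) (1/q)
  have inner_tri : ∀ ω, (∫⁻ s in Icc S T, (ENNReal.ofReal ‖Z S s ω‖ + G s ω) ^ q ∂volume) ^ (1/q)
      ≤ Au ω + Ag ω := by
    intro ω
    have h1 : Measurable fun s => ENNReal.ofReal ‖Z S s ω‖ := by
      change Measurable ((fun x : ℝ × Ω => ENNReal.ofReal ‖Z S x.1 x.2‖) ∘ (fun s => (s, ω)))
      exact humeas.comp (measurable_id.prodMk measurable_const)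
    have h2 : Measurable fun s => G s ω := by
      change Measurable ((fun x : ℝ × Ω => G x.1 x.2) ∘ (fun s => (s, ω)))
      exact hGmeas.comp (measurable_id.prodMk measurable_const)
    exact ENNReal.lintegral_Lp_add_le h1.aemeasurable h2.aemeasurable hq
  have stepB : (∫⁻ ω, (∫⁻ s in Icc S T, (ENNReal.ofReal ‖Z S s ω‖ + G s ω) ^ q ∂volume) ^ (p/q)
        ∂P) ^ (1/p)
      ≤ LpqNorm P S T p q (Z S)
        + (∫⁻ ω, (∫⁻ s in Icc S T, (G s ω) ^ q ∂volume) ^ (p/q) ∂P) ^ (1/p) := by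
    have h1 : ∀ ω, (∫⁻ s in Icc S T, (ENNReal.ofReal ‖Z S s ω‖ + G s ω) ^ q ∂volume) ^ (p/q)
        ≤ (Au ω + Ag ω) ^ p := by
      intro ω
      rw [hpow]
      exact ENNReal.rpow_le_rpow (inner_tri ω) hp0.le
    have h2 := ENNReal.lintegral_Lp_add_le (μ := P) hAumeas.aemeasurable hAgmeas.aemeasurable hp
    calc (∫⁻ ω, (∫⁻ s in Icc S T, (ENNReal.ofReal ‖Z S s ω‖ + G s ω) ^ q ∂volume) ^ (p/q) ∂P)
          ^ (1/p)
        ≤ (∫⁻ ω, (Au ω + Ag ω) ^ p ∂P) ^ (1/p) :=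
          ENNReal.rpow_le_rpow (lintegral_mono h1) (by positivity)
    _ ≤ (∫⁻ ω, Au ω ^ p ∂P) ^ (1/p) + (∫⁻ ω, Ag ω ^ p ∂P) ^ (1/p) := h2
    _ = LpqNorm P S T p q (Z S)
        + (∫⁻ ω, (∫⁻ s in Icc S T, (G s ω) ^ q ∂volume) ^ (p/q) ∂P) ^ (1/p) := by
        rw [LpqNorm]
        congr 1
        · congr 1
          exact lintegral_congr fun ω => (hpow _).symm
        · congr 1
          exact lintegral_congr fun ω => (hpow _).symm
  -- step C : Minkowski twice
  set Φ : ℝ → Ω → ℝ≥0∞ :=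
    fun τ ω => (∫⁻ s in Icc S T, (ENNReal.ofReal ‖dZ τ s ω‖) ^ q ∂volume) ^ (1/q) with hΦ
  have hΦmeas : Measurable (Function.uncurry Φ) := by
    have hbase : Measurable fun w : (ℝ × Ω) × ℝ => (ENNReal.ofReal ‖dZ w.1.1 w.2 w.1.2‖) ^ q := by
      refine meas_rpow_aux ?_ q
      change Measurable ((fun x : (ℝ × ℝ) × Ω => ENNReal.ofReal ‖dZ x.1.1 x.1.2 x.2‖) ∘
        (fun w : (ℝ × Ω) × ℝ => ((w.1.1, w.2), w.1.2)))
      exact hdm.comp (((measurable_fst.comp measurable_fst).prodMk measurable_snd).prodMk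
        (measurable_snd.comp measurable_fst))
    exact meas_rpow_aux (Measurable.lintegral_prod_right' hbase) (1/q)
  have innerM : ∀ ω, (∫⁻ s in Icc S T, (G s ω) ^ q ∂volume) ^ (1/q)
      ≤ ∫⁻ τ in Icc S T, Φ τ ω ∂volume := by
    intro ω
    have hmeasf : Measurable (Function.uncurry fun τ s => ENNReal.ofReal ‖dZ τ s ω‖) := by
      change Measurable ((fun x : (ℝ × ℝ) × Ω => ENNReal.ofReal ‖dZ x.1.1 x.1.2 x.2‖) ∘
        (fun z : ℝ × ℝ => ((z.1, z.2), ω)))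
      exact hdm.comp ((measurable_fst.prodMk measurable_snd).prodMk measurable_const)
    exact minkowski_lintegral (volume.restrict (Icc S T)) (volume.restrict (Icc S T)) hq hmeasf
  have outerM : (∫⁻ ω, (∫⁻ τ in Icc S T, Φ τ ω ∂volume) ^ p ∂P) ^ (1/p)
      ≤ ∫⁻ τ in Icc S T, (∫⁻ ω, (Φ τ ω) ^ p ∂P) ^ (1/p) ∂volume :=
    minkowski_lintegral (volume.restrict (Icc S T)) P hp hΦmeas
  have stepC : (∫⁻ ω, (∫⁻ s in Icc S T, (G s ω) ^ q ∂volume) ^ (p/q) ∂P) ^ (1/p)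
      ≤ ENNReal.ofReal (T - S) * M := by
    calc (∫⁻ ω, (∫⁻ s in Icc S T, (G s ω) ^ q ∂volume) ^ (p/q) ∂P) ^ (1/p)
        = (∫⁻ ω, ((∫⁻ s in Icc S T, (G s ω) ^ q ∂volume) ^ (1/q)) ^ p ∂P) ^ (1/p) := by
          congr 1
          exact lintegral_congr fun ω => hpow _
    _ ≤ (∫⁻ ω, (∫⁻ τ in Icc S T, Φ τ ω ∂volume) ^ p ∂P) ^ (1/p) :=
          ENNReal.rpow_le_rpow (lintegral_mono fun ω =>
            ENNReal.rpow_le_rpow (innerM ω) hp0.le) (by positivity)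
    _ ≤ ∫⁻ τ in Icc S T, (∫⁻ ω, (Φ τ ω) ^ p ∂P) ^ (1/p) ∂volume := outerM
    _ = ∫⁻ τ in Icc S T, LpqNorm P S T p q (dZ τ) ∂volume := by
          refine lintegral_congr fun τ => ?_
          rw [LpqNorm, hΦ]
          congr 1
          exact lintegral_congr fun ω => (hpow _).symm
    _ ≤ ∫⁻ _ in Icc S T, M ∂volume :=
          setLIntegral_mono' measurableSet_Icc fun τ hτ => hM τ hτ
    _ = M * volume (Icc S T) := setLIntegral_const (Icc S T) M
    _ = ENNReal.ofReal (T - S) * M := by rw [Real.volume_Icc, mul_comm]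
  calc LpqNorm P S T p q Diag
      ≤ (∫⁻ ω, (∫⁻ s in Icc S T, (ENNReal.ofReal ‖Z S s ω‖ + G s ω) ^ q ∂volume) ^ (p/q) ∂P)
        ^ (1/p) := stepA
  _ ≤ LpqNorm P S T p q (Z S)
      + (∫⁻ ω, (∫⁻ s in Icc S T, (G s ω) ^ q ∂volume) ^ (p/q) ∂P) ^ (1/p) := stepB
  _ ≤ LpqNorm P S T p q (Z S) + ENNReal.ofReal (T - S) * M := add_le_add le_rfl stepC
end
end
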